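/- arXiv:2302.04300 — 13 statements merged into one kernel-verified Lean document; each statement's English description precedes it below -/
import Mathlib

section
/- Let G be a finite group of even order q and let f : G → G be two-to-one. Then pres(f) ≤ ⌈2√q⌉ − 1, where √q is the real square root and ⌈·⌉ is the ceiling. -/
/-! Auxiliary numeric lemmas -/

/-- ceiling division -/
def cdiv (a b : ℕ) : ℕ := (a + b - 1) / b

lemma cdiv_le_iff {a b k : ℕ} (hb : 1 ≤ b) : cdiv a b ≤ k ↔ a ≤ k * b := by
  unfold cdiv
  rw [Nat.div_le_iff_le_mul_add_pred hb, mul_comm k b]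
  omega

lemma le_cdiv {a b : ℕ} (hb : 1 ≤ b) : a ≤ cdiv a b * b :=
  (cdiv_le_iff hb).mp le_rfl

lemma cdiv_mono {a b c d : ℕ} (hb : 1 ≤ b) (hd : 1 ≤ d) (h : c * b ≤ a * d) :
    cdiv c d ≤ cdiv a b := by
  rw [cdiv_le_iff hd]
  have h1 : a ≤ cdiv a b * b := le_cdiv hb
  have : c * b ≤ (cdiv a b * d) * b := by
    calc c * b ≤ a * d := h
    _ ≤ (cdiv a b * b) * d := Nat.mul_le_mul_right d h1
    _ = (cdiv a b * d) * b := by ring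
  exact Nat.le_of_mul_le_mul_right this hb

lemma cdiv_add_self (a b : ℕ) (hb : 1 ≤ b) : cdiv (a + b) b = cdiv a b + 1 := by
  unfold cdiv
  have : a + b + b - 1 = (a + b - 1) + b := by omega
  rw [this, Nat.add_div_right _ hb]

lemma cdiv_succ_le {q u u' o : ℕ} (hu' : 1 ≤ u') (h : u = u' + o) (hoq : u * u ≤ o * q) :
    cdiv q u + 1 ≤ cdiv q u' := by
  have hu : 1 ≤ u := by omega
  rw [← cdiv_add_self q u hu]
  apply cdiv_mono (a := q) (b := u') (c := q + u) (d := u) hu' hu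
  nlinarith

/-- the running bound for the greedy matching construction -/
def Bnd (q u : ℕ) : ℕ := if u ≤ q.sqrt then u else q.sqrt + cdiv q q.sqrt - cdiv q u

lemma Bnd_step {q u o : ℕ} (hq : 2 ≤ q) (hu : 1 ≤ u) (ho : o ≤ u) (h : u * u ≤ o * q) :
    1 + Bnd q (u - o) ≤ Bnd q u := by
  simp only [Bnd]
  obtain ⟨m, hmdef⟩ : ∃ m, q.sqrt = m := ⟨_, rfl⟩
  rw [hmdef]
  have hmq : m * m ≤ q := by
    have h' := Nat.sqrt_le' q
    rw [pow_two, hmdef] at h'; exact h'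
  have hqm : q < (m + 1) * (m + 1) := by
    have h' := Nat.lt_succ_sqrt' q
    rw [pow_two, hmdef] at h'; exact h'
  have hm1 : 1 ≤ m := by
    by_contra hc
    push_neg at hc
    interval_cases m
    omega
  have ho1 : 1 ≤ o := by nlinarith
  by_cases hum : u ≤ m
  · rw [if_pos hum, if_pos (by omega : u - o ≤ m)]
    omega
  · push_neg at hum
    have hu1 : 1 ≤ u := by omega
    have hCm : m ≤ cdiv q m := by
      have h1 : m * m ≤ cdiv q m * m := le_trans hmq (le_cdiv hm1)
      exact Nat.le_of_mul_le_mul_right h1 hm1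
    have hDC : cdiv q u ≤ cdiv q m := cdiv_mono hm1 hu1 (Nat.mul_le_mul_left q (le_of_lt hum))
    have hqu : q < u * u := by
      have h1 : (m + 1) * (m + 1) ≤ u * u := Nat.mul_le_mul (by omega) (by omega)
      linarith
    have ho2 : 2 ≤ o := by
      by_contra hc
      push_neg at hc
      have h1 : o * q ≤ 1 * q := Nat.mul_le_mul_right q (by omega)
      rw [one_mul] at h1
      linarith
    rw [if_neg (show ¬ u ≤ m by omega)]
    by_cases hsm : u - o ≤ m
    · rw [if_pos hsm]
      rcases eq_or_lt_of_le hDC with heq | hlt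
      · -- D(u) = C : show u ≤ m + 1
        have hule : u ≤ m + 1 := by
          by_contra hc
          push_neg at hc
          by_cases hq2 : m * m + 1 ≤ q
          · -- C ≥ m+1 hence D(u) ≥ m+1 hence q > m*u
            have hC1 : m + 1 ≤ cdiv q m := by
              have h1 : m * m < cdiv q m * m := by
                have h2 := le_cdiv hm1 (a := q)
                omega
              have := lt_of_mul_lt_mul_right h1 (Nat.zero_le m)
              omega
            have hngu : ¬ (cdiv q u ≤ m) := by omega
            rw [cdiv_le_iff hu1] at hngu
            push_neg at hngu
            have h4 : m * (m + 2) ≤ m * u := Nat.mul_le_mul_left m (by omega)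
            nlinarith
          · -- q = m*m
            have hqe : q = m * m := by omega
            obtain ⟨a, ha⟩ : ∃ a, m = a + 1 := ⟨m - 1, by omega⟩
            subst ha
            have ha1 : 1 ≤ a := by
              rcases Nat.eq_zero_or_pos a with h' | h'
              · subst h'; simp at hqe; omega
              · exact h'
            have hngu : ¬ (cdiv q u ≤ a) := by omega
            rw [cdiv_le_iff hu1] at hngu
            push_neg at hngu
            have h4 : a * (a + 3) ≤ a * u := Nat.mul_le_mul_left a (by omega)
            nlinarith
        omega
      · omega
    · rw [if_neg hsm]
      push_neg at hsm
      have hkey : cdiv q u + 1 ≤ cdiv q (u - o) :=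
        cdiv_succ_le (by omega) (by omega) h
      have hD'C : cdiv q (u - o) ≤ cdiv q m :=
        cdiv_mono hm1 (by omega) (Nat.mul_le_mul_left q (by omega))
      omega

lemma final_bound {q : ℕ} (hq : 2 ≤ q) (heven : q % 2 = 0) :
    (1 + Bnd q (q / 2) : ℤ) ≤ ⌈2 * Real.sqrt (q : ℝ)⌉ - 1 := by
  simp only [Bnd]
  obtain ⟨m, hmdef⟩ : ∃ m, q.sqrt = m := ⟨_, rfl⟩
  rw [hmdef]
  have hmq : m * m ≤ q := by
    have h' := Nat.sqrt_le' q
    rw [pow_two, hmdef] at h'; exact h'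
  have hqm : q < (m + 1) * (m + 1) := by
    have h' := Nat.lt_succ_sqrt' q
    rw [pow_two, hmdef] at h'; exact h'
  have hm1 : 1 ≤ m := by
    by_contra hc
    push_neg at hc
    interval_cases m
    omega
  have hmltq : m < q := by
    by_contra hc
    push_neg at hc
    have : q * q ≤ m * m := Nat.mul_le_mul hc hc
    nlinarith
  set C := cdiv q m with hC
  have hC2 : 2 ≤ C := by
    by_contra hc
    push_neg at hc
    have : C ≤ 1 := by omega
    rw [hC, cdiv_le_iff hm1] at this
    omega
  set n := q / 2 with hn
  have stepA : (2 + if n ≤ m then n else m + C - cdiv q n) ≤ m + C := by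
    by_cases hnm : n ≤ m
    · rw [if_pos hnm]; omega
    · rw [if_neg hnm]
      have hn1 : 1 ≤ n := by omega
      have hD : cdiv q n = 2 := by
        have h1 : cdiv q n ≤ 2 := by rw [cdiv_le_iff hn1]; omega
        have h2 : ¬ (cdiv q n ≤ 1) := by rw [cdiv_le_iff hn1]; omega
        omega
      rw [hD]
      omega
  have hq0 : (0:ℝ) ≤ (q:ℝ) := by positivity
  have stepB : (m + C : ℤ) ≤ ⌈2 * Real.sqrt (q : ℝ)⌉ := by
    have hreal : ((m + C - 1 : ℤ) : ℝ) < 2 * Real.sqrt (q : ℝ) := by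
      by_cases h1 : q = m * m
      · have hCm : C ≤ m := by rw [hC, cdiv_le_iff hm1]; omega
        have hsq : Real.sqrt (q : ℝ) = (m : ℝ) := by
          rw [h1]
          push_cast
          rw [show ((m:ℝ) * m) = (m:ℝ)^2 by ring, Real.sqrt_sq (by positivity)]
        rw [hsq]
        push_cast
        have : (C : ℝ) ≤ (m : ℝ) := by exact_mod_cast hCm
        linarith
      · by_cases h2 : q ≤ m * m + m
        · have hCm : C ≤ m + 1 := by rw [hC, cdiv_le_iff hm1]; nlinarith
          have hmsq : (m : ℝ) < Real.sqrt (q : ℝ) := by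
            rw [show (m:ℝ) = Real.sqrt ((m:ℝ)^2) by rw [Real.sqrt_sq (by positivity)]]
            apply Real.sqrt_lt_sqrt (by positivity)
            have h3 : m * m < q := by omega
            have h3' : ((m:ℝ) * m) < (q:ℝ) := by exact_mod_cast h3
            nlinarith
          have : (C : ℝ) ≤ (m : ℝ) + 1 := by exact_mod_cast hCm
          push_cast
          linarith
        · have hCm : C ≤ m + 2 := by rw [hC, cdiv_le_iff hm1]; nlinarith
          have hmsq : (m : ℝ) + 1/2 < Real.sqrt (q : ℝ) := by
            rw [show (m:ℝ) + 1/2 = Real.sqrt (((m:ℝ)+1/2)^2) by rw [Real.sqrt_sq (by positivity)]]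
            apply Real.sqrt_lt_sqrt (by positivity)
            have h3 : m * m + m + 1 ≤ q := by omega
            have h3' : ((m:ℝ) * m + m + 1) ≤ (q:ℝ) := by exact_mod_cast h3
            nlinarith
          have : (C : ℝ) ≤ (m : ℝ) + 2 := by exact_mod_cast hCm
          push_cast
          linarith
    have := Int.lt_ceil.mpr hreal
    omega
  omega

section Matching

variable {G : Type*} [AddGroup G] [Fintype G] [DecidableEq G]

lemma exists_shift (A B : Finset G) (hAB : A.card = B.card) :
    ∃ s : G, A.card * A.card ≤
      Fintype.card G * (A.filter (fun a => s + a ∈ B)).card := by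
  have hne : (Finset.univ : Finset G).Nonempty := Finset.univ_nonempty
  have key : ∑ s : G, (A.filter (fun a => s + a ∈ B)).card = A.card * B.card := by
    simp only [Finset.card_filter]
    rw [Finset.sum_comm]
    have inner : ∀ a ∈ A, (∑ s : G, if s + a ∈ B then 1 else 0) = B.card := by
      intro a _
      rw [← Finset.card_filter]
      apply Finset.card_bij' (i := fun s _ => s + a) (j := fun b _ => b - a)
      · intro s hs
        simp only [Finset.mem_filter] at hs
        exact hs.2
      · intro b hb
        simp only [Finset.mem_filter, Finset.mem_univ, true_and, sub_add_cancel]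
        exact hb
      · intro s _; exact add_sub_cancel_right s a
      · intro b _; exact sub_add_cancel b a
    rw [Finset.sum_congr rfl inner, Finset.sum_const, smul_eq_mul]
  have hsum : ∑ _s : G, A.card * A.card ≤
      ∑ s : G, Fintype.card G * (A.filter (fun a => s + a ∈ B)).card := by
    rw [Finset.sum_const, Finset.card_univ, smul_eq_mul, ← Finset.mul_sum, key, ← hAB]
  obtain ⟨s, _, hs⟩ := Finset.exists_le_of_sum_le hne hsum
  exact ⟨s, hs⟩

lemma exists_matching (hq : 2 ≤ Fintype.card G) :
    ∀ (u : ℕ) (A B : Finset G), A.card = u → B.card = u →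
    ∃ π : G → G, Set.InjOn π A ∧ A.image π = B ∧
      (A.image (fun a => π a - a)).card ≤ Bnd (Fintype.card G) u := by
  intro u
  induction u using Nat.strong_induction_on with
  | _ u ih =>
  intro A B hA hB
  rcases Nat.eq_zero_or_pos u with hu0 | hu1
  · subst hu0
    rw [Finset.card_eq_zero] at hA hB
    subst hA; subst hB
    exact ⟨id, by simp, by simp, by simp⟩
  · obtain ⟨s, hs⟩ := exists_shift A B (hA.trans hB.symm)
    set q := Fintype.card G with hqdef
    set A₁ := A.filter (fun a => s + a ∈ B) with hA₁
    set o := A₁.card with ho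
    have hA₁A : A₁ ⊆ A := Finset.filter_subset _ _
    have hou : o ≤ u := hA ▸ Finset.card_le_card hA₁A
    have ho1 : 1 ≤ o := by
      rcases Nat.eq_zero_or_pos o with h0 | h1
      · rw [hA, h0, Nat.mul_zero] at hs; nlinarith
      · exact h1
    set B₁ := A₁.image (fun a => s + a) with hB₁
    have hB₁B : B₁ ⊆ B := by
      intro b hb
      rw [hB₁, Finset.mem_image] at hb
      obtain ⟨a, ha, rfl⟩ := hb
      rw [hA₁, Finset.mem_filter] at ha
      exact ha.2
    have hinj : Function.Injective (fun a : G => s + a) := fun x y hxy => by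
      simpa using hxy
    have hB₁card : B₁.card = o := Finset.card_image_of_injective _ hinj
    set A₂ := A \ A₁ with hA₂
    set B₂ := B \ B₁ with hB₂
    have hA₂card : A₂.card = u - o := by
      rw [hA₂, Finset.card_sdiff_of_subset hA₁A, hA]
    have hB₂card : B₂.card = u - o := by
      rw [hB₂, Finset.card_sdiff_of_subset hB₁B, hB, hB₁card]
    obtain ⟨π₂, hπ₂inj, hπ₂im, hπ₂lab⟩ := ih (u - o) (by omega) A₂ B₂ hA₂card hB₂card
    refine ⟨fun x => if x ∈ A₁ then s + x else π₂ x, ?_, ?_, ?_⟩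
    · -- InjOn
      intro x hx y hy hxy
      simp only at hxy
      by_cases hx1 : x ∈ A₁ <;> by_cases hy1 : y ∈ A₁
      · rw [if_pos hx1, if_pos hy1] at hxy
        exact hinj hxy
      · rw [if_pos hx1, if_neg hy1] at hxy
        exfalso
        have hyA₂ : y ∈ A₂ := by rw [hA₂, Finset.mem_sdiff]; exact ⟨hy, hy1⟩
        have h1 : π₂ y ∈ B₂ := hπ₂im ▸ Finset.mem_image_of_mem π₂ hyA₂
        have h2 : s + x ∈ B₁ := by
          rw [hB₁, Finset.mem_image]; exact ⟨x, hx1, rfl⟩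
        rw [hB₂, Finset.mem_sdiff] at h1
        rw [hxy] at h2
        exact h1.2 h2
      · rw [if_neg hx1, if_pos hy1] at hxy
        exfalso
        have hxA₂ : x ∈ A₂ := by rw [hA₂, Finset.mem_sdiff]; exact ⟨hx, hx1⟩
        have h1 : π₂ x ∈ B₂ := hπ₂im ▸ Finset.mem_image_of_mem π₂ hxA₂
        have h2 : s + y ∈ B₁ := by
          rw [hB₁, Finset.mem_image]; exact ⟨y, hy1, rfl⟩
        rw [hB₂, Finset.mem_sdiff] at h1
        rw [← hxy] at h2
        exact h1.2 h2
      · rw [if_neg hx1, if_neg hy1] at hxy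
        have hxA₂ : x ∈ A₂ := by rw [hA₂, Finset.mem_sdiff]; exact ⟨hx, hx1⟩
        have hyA₂ : y ∈ A₂ := by rw [hA₂, Finset.mem_sdiff]; exact ⟨hy, hy1⟩
        exact hπ₂inj (by exact_mod_cast hxA₂) (by exact_mod_cast hyA₂) hxy
    · -- image
      have hsplit : A₁ ∪ A₂ = A := Finset.union_sdiff_of_subset hA₁A
      rw [← hsplit, Finset.image_union]
      have h1 : A₁.image (fun x => if x ∈ A₁ then s + x else π₂ x) = B₁ := by
        rw [hB₁]
        apply Finset.image_congr
        intro x hx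
        simp only [Finset.mem_coe] at hx
        simp only [if_pos hx]
      have h2 : A₂.image (fun x => if x ∈ A₁ then s + x else π₂ x) = B₂ := by
        rw [← hπ₂im]
        apply Finset.image_congr
        intro x hx
        have hx' : x ∈ A \ A₁ := hx
        rw [Finset.mem_sdiff] at hx'
        simp only [if_neg hx'.2]
      rw [h1, h2, hB₂, Finset.union_sdiff_of_subset hB₁B]
    · -- labels
      have hsub : A.image (fun a => (if a ∈ A₁ then s + a else π₂ a) - a) ⊆
          insert s (A₂.image (fun a => π₂ a - a)) := by
        intro t ht
        rw [Finset.mem_image] at ht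
        obtain ⟨a, ha, rfl⟩ := ht
        by_cases ha1 : a ∈ A₁
        · rw [if_pos ha1, add_sub_cancel_right]
          exact Finset.mem_insert_self s _
        · rw [if_neg ha1]
          apply Finset.mem_insert_of_mem
          rw [Finset.mem_image]
          exact ⟨a, by rw [hA₂, Finset.mem_sdiff]; exact ⟨ha, ha1⟩, rfl⟩
      calc (A.image (fun a => (if a ∈ A₁ then s + a else π₂ a) - a)).card
          ≤ (insert s (A₂.image (fun a => π₂ a - a))).card := Finset.card_le_card hsub
        _ ≤ 1 + (A₂.image (fun a => π₂ a - a)).card := by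
            rw [add_comm]; exact Finset.card_insert_le _ _
        _ ≤ 1 + Bnd q (u - o) := by omega
        _ ≤ Bnd q u := Bnd_step hq hu1 hou (by rw [hA] at hs; linarith [hs])

end Matching

/-- The number of distinct values of `f`, i.e. `V(f) = #Im(f)`. -/
def imCard {G : Type*} [Fintype G] [DecidableEq G] (f : G → G) : ℕ :=
  (Finset.univ.image f).card

/-- The set of preimages of `b` under `f`. -/
def preim {G : Type*} [Fintype G] [DecidableEq G] (f : G → G) (b : G) : Finset G :=
  Finset.univ.filter (fun x => f x = b)

/-- Permutation resemblance: `pres(f) = min{V(g) : g + f is a permutation of G}`. -/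
noncomputable def pres {G : Type*} [AddGroup G] [Fintype G] [DecidableEq G] (f : G → G) : ℕ :=
  sInf {n | ∃ g : G → G, Function.Bijective (fun x => g x + f x) ∧ imCard g = n}

/-- If `#G = q` is even and `f : G → G` is two-to-one, then
`pres(f) ≤ ⌈2√q⌉ − 1`. -/
theorem pres_le_of_even_two_to_one {G : Type*} [AddGroup G] [Fintype G] [DecidableEq G]
    (f : G → G) (hq : Even (Fintype.card G))
    (h2 : ∀ b ∈ Finset.univ.image f, (preim f b).card = 2) :
    (pres f : ℤ) ≤ ⌈2 * Real.sqrt (Fintype.card G : ℝ)⌉ - 1 := by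
  classical
  set q := Fintype.card G with hqdef
  have hq1 : 1 ≤ q := Fintype.card_pos
  have heven : q % 2 = 0 := Nat.even_iff.mp hq
  have hq2 : 2 ≤ q := by omega
  set I := Finset.univ.image f with hI
  set n := I.card with hn
  have hq2n : q = 2 * n := by
    have hcard := Finset.card_eq_sum_card_image f (Finset.univ : Finset G)
    have hsum : ∑ b ∈ I, (Finset.univ.filter (fun x => f x = b)).card = ∑ b ∈ I, 2 := by
      apply Finset.sum_congr rfl
      intro b hb
      exact h2 b hb
    rw [Finset.card_univ] at hcard
    rw [hsum, Finset.sum_const, smul_eq_mul, mul_comm] at hcard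
    exact hcard
  have hnq2 : n = q / 2 := by omega
  set U := (Finset.univ : Finset G) \ I with hU
  have hUcard : U.card = n := by
    rw [hU, Finset.card_sdiff_of_subset (Finset.subset_univ I), Finset.card_univ, ← hqdef]
    omega
  obtain ⟨π, hinj, him, hlab⟩ := exists_matching hq2 n I U rfl hUcard
  rw [← hqdef] at hlab
  have hex : ∀ b, b ∈ I → ∃ x, f x = b := by
    intro b hb
    rw [hI, Finset.mem_image] at hb
    obtain ⟨x, _, hx⟩ := hb
    exact ⟨x, hx⟩
  set c : G → G := fun b => if h : ∃ x, f x = b then h.choose else 0 with hc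
  have hfc : ∀ b ∈ I, f (c b) = b := by
    intro b hb
    rw [hc]
    simp only
    rw [dif_pos (hex b hb)]
    exact (hex b hb).choose_spec
  set h : G → G := fun x => if x = c (f x) then f x else π (f x) with hh
  have hfI : ∀ x : G, f x ∈ I := fun x => by
    rw [hI]; exact Finset.mem_image_of_mem f (Finset.mem_univ x)
  have hπU : ∀ x : G, π (f x) ∈ U := fun x => by
    rw [← him]; exact Finset.mem_image_of_mem π (hfI x)
  have hUnotI : ∀ b ∈ U, b ∉ I := by
    intro b hb; rw [hU, Finset.mem_sdiff] at hb; exact hb.2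
  have hhinj : Function.Injective h := by
    intro x y hxy
    rw [hh] at hxy
    simp only at hxy
    by_cases hx1 : x = c (f x) <;> by_cases hy1 : y = c (f y)
    · rw [if_pos hx1, if_pos hy1] at hxy
      rw [hx1, hy1, hxy]
    · rw [if_pos hx1, if_neg hy1] at hxy
      exact absurd (hxy ▸ hfI x) (hUnotI _ (hπU y))
    · rw [if_neg hx1, if_pos hy1] at hxy
      exact absurd (hxy.symm ▸ hfI y) (hUnotI _ (hπU x))
    · rw [if_neg hx1, if_neg hy1] at hxy
      have hfxy : f x = f y := hinj (Finset.mem_coe.mpr (hfI x)) (Finset.mem_coe.mpr (hfI y)) hxy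
      have hcard2 : (preim f (f x)).card = 2 := h2 (f x) (hfI x)
      obtain ⟨a, b', hab, habs⟩ := Finset.card_eq_two.mp hcard2
      have hxmem : x ∈ preim f (f x) := by simp [preim]
      have hymem : y ∈ preim f (f x) := by simp [preim, hfxy]
      have hcmem : c (f x) ∈ preim f (f x) := by
        simp only [preim, Finset.mem_filter, Finset.mem_univ, true_and]
        exact hfc (f x) (hfI x)
      rw [habs] at hxmem hymem hcmem
      simp only [Finset.mem_insert, Finset.mem_singleton] at hxmem hymem hcmem
      have hy1' : y ≠ c (f x) := by rw [hfxy]; exact hy1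
      rcases hxmem with hx' | hx' <;> rcases hymem with hy' | hy' <;>
        rcases hcmem with hc' | hc' <;>
        first
          | (exact absurd (hx'.trans hc'.symm) hx1)
          | (exact absurd (hy'.trans hc'.symm) hy1')
          | (exact hx'.trans hy'.symm)
  have hhbij : Function.Bijective h := Finite.injective_iff_bijective.mp hhinj
  set g : G → G := fun x => h x - f x with hg
  have hgf : (fun x => g x + f x) = h := by
    funext x
    rw [hg]
    simp only
    exact sub_add_cancel (h x) (f x)
  have hmem : imCard g ∈ {k | ∃ g' : G → G,
      Function.Bijective (fun x => g' x + f x) ∧ imCard g' = k} :=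
    ⟨g, by rw [hgf]; exact hhbij, rfl⟩
  have hpres : pres f ≤ imCard g := Nat.sInf_le hmem
  have hsub : Finset.univ.image g ⊆ insert 0 (I.image (fun b => π b - b)) := by
    intro t ht
    rw [Finset.mem_image] at ht
    obtain ⟨x, _, rfl⟩ := ht
    rw [hg, hh]
    simp only
    by_cases hx1 : x = c (f x)
    · rw [if_pos hx1, sub_self]
      exact Finset.mem_insert_self _ _
    · rw [if_neg hx1]
      exact Finset.mem_insert_of_mem (Finset.mem_image_of_mem _ (hfI x))
  have hbound : imCard g ≤ 1 + Bnd q n := by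
    calc imCard g = (Finset.univ.image g).card := rfl
      _ ≤ (insert 0 (I.image (fun b => π b - b))).card := Finset.card_le_card hsub
      _ ≤ 1 + (I.image (fun b => π b - b)).card := by
          rw [add_comm]; exact Finset.card_insert_le _ _
      _ ≤ 1 + Bnd q n := by omega
  have hfinal := final_bound hq2 heven
  rw [← hnq2] at hfinal
  have hcast : (pres f : ℤ) ≤ ((1 + Bnd q n : ℕ) : ℤ) := by
    exact_mod_cast le_trans hpres hbound
  calc (pres f : ℤ) ≤ ((1 + Bnd q n : ℕ) : ℤ) := hcast
    _ = (1 + Bnd q n : ℤ) := by push_cast; ring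
    _ ≤ _ := hfinal
end

section
/- Let G be a finite group whose order q is a perfect square (q = s² for some positive integer s) and let f : G → G be two-to-one. Then pres(f) ≤ 2s − 2, i.e. pres(f) ≤ 2√q − 2. -/
inductive Finishable (q : ℕ) : ℕ → ℕ → ℕ → Prop
  | base {z r c : ℕ} : r ≤ c → Finishable q z r c
  | step {z r c : ℕ} : 0 < r →
      (∀ b : ℕ, r ^ 2 ≤ b * (q - z) → b ≤ r → Finishable q (z + 1) (r - b) c) →
      Finishable q z r (c + 1)

private lemma keyIneq (M R k : ℤ) (hM : 1 ≤ M) (hR : 0 ≤ R) (hk : 0 ≤ k)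
    (hA : R * (k + 2) ≤ M + 1) (hkM : k * k + 3 * k ≤ M) :
    R * (M - R) * (k + 3) ≤ M * M := by
  rcases eq_or_lt_of_le hk with hk0 | hk1
  · rw [← hk0]
    nlinarith [sq_nonneg (M - 2 * R)]
  · have hk1' : 1 ≤ k := hk1
    have hM4 : 4 ≤ M := by nlinarith
    have h1 : R * (k + 2) ≤ M * (k + 2) - (M + 1) := by nlinarith
    have key1 : (R * (k + 2)) * (M * (k + 2) - R * (k + 2)) ≤ (M + 1) * (M * (k + 1) - 1) := by
      nlinarith [mul_nonneg (sub_nonneg.mpr hA) (sub_nonneg.mpr h1)]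
    have key2 : ((M + 1) * (M * (k + 1) - 1)) * (k + 3) ≤ (M * M) * ((k + 2) * (k + 2)) := by
      nlinarith [mul_le_mul_of_nonneg_left hkM (by linarith : (0:ℤ) ≤ M)]
    have key3 : (R * (M - R) * (k + 3)) * ((k + 2) * (k + 2)) ≤ (M * M) * ((k + 2) * (k + 2)) := by
      calc (R * (M - R) * (k + 3)) * ((k + 2) * (k + 2))
          = ((R * (k + 2)) * (M * (k + 2) - R * (k + 2))) * (k + 3) := by ring
        _ ≤ ((M + 1) * (M * (k + 1) - 1)) * (k + 3) :=
            mul_le_mul_of_nonneg_right key1 (by linarith)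
        _ ≤ (M * M) * ((k + 2) * (k + 2)) := key2
    exact le_of_mul_le_mul_right key3 (by positivity)

private lemma arith_step (q k r b : ℕ) (h1 : r * (k + 2) + k ≤ q)
    (h2 : r ^ 2 ≤ b * (q - (k + 1))) (h3 : b ≤ r) (h4 : (k + 2) ^ 2 ≤ q + 3)
    (hm : k + 1 < q) : (r - b) * (k + 3) + (k + 1) ≤ q := by
  have hsub : ((q - (k + 1) : ℕ) : ℤ) = (q : ℤ) - ((k : ℤ) + 1) := by
    push_cast [Nat.cast_sub hm.le]; ring
  have hb : ((r : ℤ)) ^ 2 ≤ (b : ℤ) * ((q : ℤ) - ((k : ℤ) + 1)) := by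
    have h2' := (Nat.cast_le (α := ℤ)).mpr h2
    rwa [Nat.cast_mul, hsub] at h2'
  set M : ℤ := (q : ℤ) - ((k : ℤ) + 1) with hMdef
  have hM1 : 1 ≤ M := by simp only [hMdef]; omega
  have hA : (r : ℤ) * ((k : ℤ) + 2) ≤ M + 1 := by
    have := (Nat.cast_le (α := ℤ)).mpr h1; push_cast at this; simp only [hMdef]; linarith
  have hkM : (k : ℤ) * k + 3 * k ≤ M := by
    have := (Nat.cast_le (α := ℤ)).mpr h4; push_cast at this; simp only [hMdef]; nlinarith
  have KI := keyIneq M (r : ℤ) (k : ℤ) hM1 (by positivity) (by positivity) hA hkM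
  have hmain : ((r : ℤ) - (b : ℤ)) * ((k : ℤ) + 3) ≤ M := by
    have step1 : M * (((r : ℤ) - b) * ((k : ℤ) + 3)) ≤ M * M := by nlinarith
    exact le_of_mul_le_mul_left step1 (by linarith)
  have hcast : ((r - b : ℕ) : ℤ) = (r : ℤ) - (b : ℤ) := by push_cast [Nat.cast_sub h3]; ring
  have : ((r - b : ℕ) : ℤ) * ((k : ℤ) + 3) + ((k : ℤ) + 1) ≤ (q : ℤ) := by
    rw [hcast]; simp only [hMdef] at hmain; linarith
  exact_mod_cast this

private lemma chain (s : ℕ) (hs : 3 ≤ s) :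
    ∀ n j r : ℕ, j + n = s - 2 → r * (j + 2) + j ≤ s ^ 2 →
      Finishable (s ^ 2) (j + 1) r (2 * s - 3 - j) := by
  intro n
  induction n with
  | zero =>
    intro j r hj hr
    have hj' : j = s - 2 := by omega
    have hcoef : j + 2 = s := by omega
    rw [hcoef] at hr
    have hrs : r ≤ s - 1 := by
      by_contra hcon
      have hrge : s ≤ r := by omega
      have : s * s ≤ r * s := Nat.mul_le_mul_right _ hrge
      have hsq : s ^ 2 = s * s := sq s
      omega
    exact Finishable.base (by omega)
  | succ n ih =>
    intro j r hj hr
    by_cases hbase : r ≤ 2 * s - 3 - j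
    · exact Finishable.base hbase
    · have hj3 : j ≤ s - 3 := by omega
      have hc' : 2 * s - 3 - j = (2 * s - 3 - (j + 1)) + 1 := by omega
      rw [hc']
      refine Finishable.step (by omega) ?_
      intro b hb hbr
      have h4 : (j + 2) ^ 2 ≤ s ^ 2 + 3 := by
        have h5 : j + 2 ≤ s := by omega
        have := Nat.pow_le_pow_left h5 2
        omega
      have hm : j + 1 < s ^ 2 := by
        have : s ≤ s ^ 2 := by nlinarith
        omega
      have harith := arith_step (s ^ 2) j r b hr hb hbr h4 hm
      exact ih (j + 1) (r - b) (by omega) harith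

private lemma finish_start (s : ℕ) (hs : 2 ≤ s) (r : ℕ) (hr : r * 2 = s ^ 2) :
    Finishable (s ^ 2) 1 r (2 * s - 3) := by
  rcases eq_or_lt_of_le hs with hs2 | hs3
  · -- s = 2 : q = 4, r = 2, budget 1
    have hq : s ^ 2 = 4 := by rw [← hs2]; norm_num
    have hr2 : r = 2 := by omega
    subst hr2
    rw [hq]
    have h0 : (2 * s - 3) = 0 + 1 := by omega
    rw [h0]
    refine Finishable.step (by norm_num) ?_
    intro b hb hbr
    have : b = 2 := by omega
    subst this
    exact Finishable.base (by norm_num)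
  · have h := chain s hs3 (s - 2) 0 r (by omega) (by omega)
    simpa using h

private lemma matching_of_finishable {G : Type*} [AddGroup G] [Fintype G] [DecidableEq G]
    {z r c : ℕ} (h : Finishable (Fintype.card G) z r c) :
    ∀ A U Z : Finset G, A.card = r → U.card = r → Z.card = z →
      (∀ d ∈ Z, ∀ a ∈ A, d + a ∉ U) →
      ∃ dfun : G → G, (A.image dfun).card ≤ c ∧
        (∀ a₁ ∈ A, ∀ a₂ ∈ A, dfun a₁ + a₁ = dfun a₂ + a₂ → a₁ = a₂) ∧
        (∀ a ∈ A, dfun a + a ∈ U) := by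
  induction h with
  | @base z r c hrc =>
    intro A U Z hA hU hZ _
    classical
    have hcards : A.card = U.card := hA.trans hU.symm
    let e : A ≃ U := Finset.equivOfCardEq hcards
    refine ⟨fun a => if h : a ∈ A then ((e ⟨a, h⟩ : G) - a) else 0, ?_, ?_, ?_⟩
    · calc (A.image _).card ≤ A.card := Finset.card_image_le
        _ ≤ c := hA ▸ hrc
    · intro a₁ h₁ a₂ h₂ heq
      simp only [dif_pos h₁, dif_pos h₂, sub_add_cancel] at heq
      have := e.injective (Subtype.ext heq)
      exact congrArg Subtype.val this
    · intro a ha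
      simp only [dif_pos ha, sub_add_cancel]
      exact (e ⟨a, ha⟩).2
  | @step z r c hr hstep ih =>
    intro A U Z hA hU hZ hdead
    classical
    set q := Fintype.card G with hq
    -- total count
    have hinner : ∀ a ∈ A, (Finset.univ.filter fun d : G => d + a ∈ U).card = r := by
      intro a _
      have himg : Finset.univ.filter (fun d : G => d + a ∈ U) = U.image (fun u => u - a) := by
        ext d
        simp only [Finset.mem_filter, Finset.mem_univ, true_and, Finset.mem_image]
        constructor
        · intro hd; exact ⟨d + a, hd, add_sub_cancel_right d a⟩
        · rintro ⟨u, hu, rfl⟩; rwa [sub_add_cancel]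
      rw [himg, Finset.card_image_of_injective _ (fun x y hxy => by
        simpa using sub_left_injective hxy), hU]
    have hsum : ∑ d : G, (A.filter fun a => d + a ∈ U).card = r * r := by
      have h1 : ∀ d : G, (A.filter fun a => d + a ∈ U).card
          = ∑ a ∈ A, if d + a ∈ U then 1 else 0 := fun d => Finset.card_filter _ _
      simp_rw [h1]
      rw [Finset.sum_comm]
      have h2 : ∀ a ∈ A, (∑ d : G, if d + a ∈ U then 1 else 0) = r := by
        intro a ha
        rw [← Finset.card_filter]
        exact hinner a ha
      rw [Finset.sum_congr rfl h2, Finset.sum_const, hA, smul_eq_mul]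
    have hzero : ∀ d ∈ Z, (A.filter fun a => d + a ∈ U).card = 0 := by
      intro d hd
      rw [Finset.card_eq_zero, Finset.filter_eq_empty_iff]
      intro x hx
      exact hdead d hd x hx
    set S := Finset.univ \ Z with hS
    have hsumS : ∑ d ∈ S, (A.filter fun a => d + a ∈ U).card = r * r := by
      have := Finset.sum_sdiff (Finset.subset_univ Z)
        (f := fun d : G => (A.filter fun a => d + a ∈ U).card)
      rw [Finset.sum_congr rfl hzero, Finset.sum_const, smul_eq_mul, mul_zero, add_zero] at this
      rw [hS, this, hsum]
    have hcardS : S.card = q - z := by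
      rw [hS, Finset.card_sdiff_of_subset (Finset.subset_univ Z), Finset.card_univ, hZ]
    have hSne : S.Nonempty := by
      rcases S.eq_empty_or_nonempty with hemp | hne
      · exfalso
        rw [hemp, Finset.sum_empty] at hsumS
        rcases Nat.mul_eq_zero.mp hsumS.symm with h0 | h0 <;> omega
      · exact hne
    obtain ⟨d, hdS, hdle⟩ : ∃ d ∈ S, r ^ 2 ≤ (q - z) * (A.filter fun a => d + a ∈ U).card := by
      apply Finset.exists_le_of_sum_le hSne
      rw [← Finset.mul_sum, hsumS, Finset.sum_const, smul_eq_mul, hcardS, ← sq]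
    set B := A.filter (fun a => d + a ∈ U) with hB
    set b := B.card with hb
    have hBA : B ⊆ A := Finset.filter_subset _ _
    have hbr : b ≤ r := hA ▸ Finset.card_le_card hBA
    have hbineq : r ^ 2 ≤ b * (q - z) := by rw [mul_comm]; exact hdle
    set A' := A \ B with hA'
    set U' := U \ B.image (fun a => d + a) with hU'
    have himgB : B.image (fun a => d + a) ⊆ U := by
      intro y hy
      obtain ⟨a, ha, rfl⟩ := Finset.mem_image.mp hy
      exact (Finset.mem_filter.mp ha).2
    have hcardimgB : (B.image (fun a => d + a)).card = b :=
      Finset.card_image_of_injective _ (add_right_injective d)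
    have hA'card : A'.card = r - b := by rw [hA', Finset.card_sdiff_of_subset hBA, hA]
    have hU'card : U'.card = r - b := by
      rw [hU', Finset.card_sdiff_of_subset himgB, hU, hcardimgB]
    have hdZ : d ∉ Z := by
      rw [hS] at hdS; exact (Finset.mem_sdiff.mp hdS).2
    have hZ'card : (insert d Z).card = z + 1 := by
      rw [Finset.card_insert_of_notMem hdZ, hZ]
    have hdead' : ∀ d' ∈ insert d Z, ∀ a ∈ A', d' + a ∉ U' := by
      intro d' hd' a ha hmem
      have haA : a ∈ A := (Finset.mem_sdiff.mp ha).1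
      have haB : a ∉ B := (Finset.mem_sdiff.mp ha).2
      have hmemU : d' + a ∈ U := (Finset.mem_sdiff.mp hmem).1
      rcases Finset.mem_insert.mp hd' with rfl | hd'Z
      · exact haB (Finset.mem_filter.mpr ⟨haA, hmemU⟩)
      · exact hdead d' hd'Z a haA hmemU
    obtain ⟨dfun', hcard', hinj', hmem'⟩ :=
      ih b hbineq hbr A' U' (insert d Z) hA'card hU'card hZ'card hdead'
    refine ⟨fun x => if x ∈ B then d else dfun' x, ?_, ?_, ?_⟩
    · have hsub : A.image (fun x => if x ∈ B then d else dfun' x)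
          ⊆ insert d (A'.image dfun') := by
        intro y hy
        obtain ⟨a, ha, rfl⟩ := Finset.mem_image.mp hy
        by_cases hxB : a ∈ B
        · rw [if_pos hxB]; exact Finset.mem_insert_self _ _
        · rw [if_neg hxB]
          exact Finset.mem_insert_of_mem
            (Finset.mem_image_of_mem _ (Finset.mem_sdiff.mpr ⟨ha, hxB⟩))
      calc (A.image _).card ≤ (insert d (A'.image dfun')).card := Finset.card_le_card hsub
        _ ≤ (A'.image dfun').card + 1 := Finset.card_insert_le _ _
        _ ≤ c + 1 := by omega
    · intro a₁ h₁ a₂ h₂ heq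
      by_cases hB1 : a₁ ∈ B <;> by_cases hB2 : a₂ ∈ B
      · simp only [if_pos hB1, if_pos hB2] at heq
        exact add_left_cancel heq
      · exfalso
        simp only [if_pos hB1, if_neg hB2] at heq
        have hmem2 : dfun' a₂ + a₂ ∈ U' := hmem' a₂ (Finset.mem_sdiff.mpr ⟨h₂, hB2⟩)
        have : d + a₁ ∈ B.image (fun a => d + a) := Finset.mem_image_of_mem _ hB1
        rw [heq] at this
        exact (Finset.mem_sdiff.mp hmem2).2 this
      · exfalso
        simp only [if_neg hB1, if_pos hB2] at heq
        have hmem1 : dfun' a₁ + a₁ ∈ U' := hmem' a₁ (Finset.mem_sdiff.mpr ⟨h₁, hB1⟩)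
        have : d + a₂ ∈ B.image (fun a => d + a) := Finset.mem_image_of_mem _ hB2
        rw [← heq] at this
        exact (Finset.mem_sdiff.mp hmem1).2 this
      · simp only [if_neg hB1, if_neg hB2] at heq
        exact hinj' a₁ (Finset.mem_sdiff.mpr ⟨h₁, hB1⟩) a₂ (Finset.mem_sdiff.mpr ⟨h₂, hB2⟩) heq
    · intro a ha
      by_cases hxB : a ∈ B
      · simp only [if_pos hxB]; exact (Finset.mem_filter.mp hxB).2
      · simp only [if_neg hxB]
        exact (Finset.mem_sdiff.mp (hmem' a (Finset.mem_sdiff.mpr ⟨ha, hxB⟩))).1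

/-- If `#G = q = s²` is a perfect square and `f : G → G` is two-to-one, then
`pres(f) ≤ 2√q − 2 = 2s − 2`. -/
theorem pres_le_of_square_two_to_one {G : Type*} [AddGroup G] [Fintype G] [DecidableEq G]
    (f : G → G) (s : ℕ) (hs : 0 < s) (hq : Fintype.card G = s ^ 2)
    (h2 : ∀ b ∈ Finset.univ.image f, (preim f b).card = 2) :
    pres f ≤ 2 * s - 2 := by
  classical
  set N := Finset.univ.image f with hN
  -- q = 2 * |N|
  have hfib : (Finset.univ : Finset G).card = ∑ b ∈ N, (preim f b).card := by
    refine Finset.card_eq_sum_card_fiberwise ?_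
    intro x _
    exact Finset.mem_image_of_mem f (Finset.mem_univ x)
  have h2N : N.card * 2 = Fintype.card G := by
    rw [← Finset.card_univ, hfib, Finset.sum_congr rfl h2, Finset.sum_const, smul_eq_mul]
  have hs2 : 2 ≤ s := by
    by_contra hcon
    have hs1 : s = 1 := by omega
    rw [hq, hs1] at h2N
    omega
  -- Finishable instance
  have hfin : Finishable (Fintype.card G) 1 N.card (2 * s - 3) := by
    rw [hq]
    exact finish_start s hs2 N.card (by rw [h2N, hq])
  -- complement
  have hUcard : Nᶜ.card = N.card := by
    rw [Finset.card_compl]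
    omega
  have hdead : ∀ d ∈ ({0} : Finset G), ∀ a ∈ N, d + a ∉ Nᶜ := by
    intro d hd a ha hmem
    rw [Finset.mem_singleton] at hd
    subst hd
    rw [zero_add] at hmem
    exact (Finset.mem_compl.mp hmem) ha
  obtain ⟨dfun, hcard, hinj, hmem⟩ :=
    matching_of_finishable hfin N Nᶜ {0} rfl hUcard (Finset.card_singleton 0) hdead
  -- pick a distinguished preimage for each value
  have hne : ∀ b ∈ N, (preim f b).Nonempty := by
    intro b hb
    rw [← Finset.card_pos, h2 b hb]
    norm_num
  set pick : G → G := fun b => if h : (preim f b).Nonempty then h.choose else 0 with hpick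
  have hpickmem : ∀ b ∈ N, pick b ∈ preim f b := by
    intro b hb
    have h := hne b hb
    simp only [hpick, dif_pos h]
    exact h.choose_spec
  have hfx : ∀ x : G, f x ∈ N := fun x => Finset.mem_image_of_mem f (Finset.mem_univ x)
  have hpf : ∀ x : G, f (pick (f x)) = f x := by
    intro x
    exact (Finset.mem_filter.mp (hpickmem _ (hfx x))).2
  set g : G → G := fun x => if x = pick (f x) then 0 else dfun (f x) with hg
  -- injectivity
  have hinj2 : Function.Injective (fun x => g x + f x) := by
    intro x y hxy
    simp only [hg] at hxy
    by_cases hx : x = pick (f x) <;> by_cases hy : y = pick (f y)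
    · simp only [if_pos hx, if_pos hy, zero_add] at hxy
      rw [hx, hy, hxy]
    · exfalso
      simp only [if_pos hx, if_neg hy, zero_add] at hxy
      have h1 : dfun (f y) + f y ∈ Nᶜ := hmem (f y) (hfx y)
      rw [← hxy] at h1
      exact (Finset.mem_compl.mp h1) (hfx x)
    · exfalso
      simp only [if_neg hx, if_pos hy, zero_add] at hxy
      have h1 : dfun (f x) + f x ∈ Nᶜ := hmem (f x) (hfx x)
      rw [hxy] at h1
      exact (Finset.mem_compl.mp h1) (hfx y)
    · simp only [if_neg hx, if_neg hy] at hxy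
      have hfe : f x = f y := hinj (f x) (hfx x) (f y) (hfx y) hxy
      by_contra hne2
      have hp := hpickmem (f x) (hfx x)
      have hxmem : x ∈ preim f (f x) := by
        simp [preim]
      have hymem : y ∈ preim f (f x) := by
        simp [preim, ← hfe]
      have hxp : x ≠ pick (f x) := hx
      have hyp : y ≠ pick (f x) := by rw [hfe]; exact hy
      have hsub : insert x (insert y {pick (f x)}) ⊆ preim f (f x) := by
        intro w hw
        simp only [Finset.mem_insert, Finset.mem_singleton] at hw
        rcases hw with rfl | rfl | rfl
        · exact hxmem
        · exact hymem
        · exact hp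
      have hx1 : x ∉ insert y ({pick (f x)} : Finset G) := by simp [hne2, hxp]
      have hy1 : y ∉ ({pick (f x)} : Finset G) := by simp [hyp]
      have hc3 : (insert x (insert y ({pick (f x)} : Finset G))).card = 3 := by
        rw [Finset.card_insert_of_notMem hx1, Finset.card_insert_of_notMem hy1,
          Finset.card_singleton]
      have := Finset.card_le_card hsub
      rw [hc3, h2 (f x) (hfx x)] at this
      omega
  have hbij : Function.Bijective (fun x => g x + f x) :=
    Finite.injective_iff_bijective.mp hinj2
  -- image bound
  have himg : Finset.univ.image g ⊆ insert (0 : G) (N.image dfun) := by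
    intro v hv
    obtain ⟨x, _, rfl⟩ := Finset.mem_image.mp hv
    by_cases hx : x = pick (f x)
    · simp only [hg, if_pos hx]
      exact Finset.mem_insert_self _ _
    · simp only [hg, if_neg hx]
      exact Finset.mem_insert_of_mem (Finset.mem_image_of_mem _ (hfx x))
  have hbound : imCard g ≤ 2 * s - 2 := by
    unfold imCard
    calc (Finset.univ.image g).card ≤ (insert (0 : G) (N.image dfun)).card :=
          Finset.card_le_card himg
      _ ≤ (N.image dfun).card + 1 := Finset.card_insert_le _ _
      _ ≤ (2 * s - 3) + 1 := by omega
      _ ≤ 2 * s - 2 := by omega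
  have hmemS : imCard g ∈ {n | ∃ g' : G → G,
      Function.Bijective (fun x => g' x + f x) ∧ imCard g' = n} := ⟨g, hbij, rfl⟩
  exact le_trans (Nat.sInf_le hmemS) hbound
end

section
/- Let q be an odd prime power and let f : F_q → F_q be the squaring map f(x) = x². Then pres(f) ≤ ⌈2√(q−1)⌉ − 1, where √(q−1) is the real square root and ⌈·⌉ is the ceiling. -/
def Kstep (q n : ℕ) : ℕ := max 1 ((n^2 + q - 1)/q)
lemma Kstep_pos (q n : ℕ) : 1 ≤ Kstep q n := le_max_left _ _
def Kfun (q : ℕ) : ℕ → ℕ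
  | 0 => 0
  | (n+1) => 1 + Kfun q (n + 1 - Kstep q (n+1))
termination_by n => n
decreasing_by
  have := Kstep_pos q (n+1); omega
lemma Kfun_zero (q : ℕ) : Kfun q 0 = 0 := by rw [Kfun]
lemma Kfun_pos_eq (q n : ℕ) (hn : 0 < n) : Kfun q n = 1 + Kfun q (n - Kstep q n) := by
  obtain ⟨m, rfl⟩ := Nat.exists_eq_add_of_lt hn
  simp only [Nat.zero_add]
  rw [Kfun]
lemma Kfun_le_self (q : ℕ) : ∀ n, Kfun q n ≤ n := by
  intro n
  induction n using Nat.strong_induction_on with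
  | _ n IH =>
    rcases Nat.eq_zero_or_pos n with h0 | hpos
    · simp [h0, Kfun_zero]
    · rw [Kfun_pos_eq q n hpos]
      have h1 := Kstep_pos q n
      have := IH (n - Kstep q n) (by omega)
      omega

/-- `q·Kstep q n ≥ n²`. -/
lemma Kstep_mul (q n : ℕ) (hq : 0 < q) : n^2 ≤ q * Kstep q n := by
  have h1 : q * ((n^2 + q - 1)/q) + (n^2 + q - 1) % q = n^2 + q - 1 := Nat.div_add_mod _ _
  have h2 : (n^2 + q - 1) % q < q := Nat.mod_lt _ hq
  have h3 : (n^2 + q - 1)/q ≤ Kstep q n := le_max_right _ _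
  have h4 : q * ((n^2 + q - 1)/q) ≤ q * Kstep q n := Nat.mul_le_mul_left q h3
  omega

/-- Claim C: `Kfun q n ≤ s + (⌈q/s⌉ − ⌊q/n⌋)`. -/
lemma Kfun_le_claimC (q s : ℕ) (hq : 1  ≤ q) (hs : 1 ≤ s) :
    ∀ n, Kfun q n ≤ s + ((q + s - 1)/s - q/n) := by
  intro n
  induction n using Nat.strong_induction_on with
  | _ n IH =>
  rcases le_or_gt n s with hns | hsn
  · exact le_trans (le_trans (Kfun_le_self q n) hns) (Nat.le_add_right _ _)
  have hn1 : 0 < n := by omega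
  have hd1 : 1 ≤ Kstep q n := Kstep_pos q n
  rw [Kfun_pos_eq q n hn1]
  obtain ⟨d, hd⟩ : ∃ d, d = Kstep q n := ⟨_, rfl⟩
  obtain ⟨A, hA⟩ : ∃ A, A = (q + s - 1)/s := ⟨_, rfl⟩
  obtain ⟨b, hb⟩ : ∃ b, b = q / n := ⟨_, rfl⟩
  rw [← hd, ← hA, ← hb]
  rw [← hd] at hd1
  rcases Nat.eq_zero_or_pos (n - d) with hnd0 | hnd1
  · rw [hnd0, Kfun_zero]
    omega
  have hAs : q ≤ A * s := by
    have h1 : s * ((q + s - 1)/s) + (q + s - 1) % s = q + s - 1 := Nat.div_add_mod _ _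
    have h2 : (q + s - 1) % s < s := Nat.mod_lt _ hs
    rw [← hA] at h1
    have h3 : s * A = A * s := Nat.mul_comm _ _
    omega
  have hbn : b * n ≤ q := by rw [hb]; exact Nat.div_mul_le_self q n
  have hnb1 : q + 1 ≤ n * (b + 1) := by
    have h1 : n * (q / n) + q % n = q := Nat.div_add_mod _ _
    have h2 : q % n < n := Nat.mod_lt _ hn1
    rw [← hb] at h1
    have h3 : n * (b + 1) = n * b + n := by ring
    have h4 : b * n = n * b := Nat.mul_comm _ _
    omega
  have hAb : b + 1 ≤ A := by
    by_contra hcon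
    push_neg at hcon
    have hA_le_b : A ≤ b := by omega
    have h5 : A * s ≤ b * s := Nat.mul_le_mul_right s hA_le_b
    have h6 : b * s ≤ b * (n - 1) := Nat.mul_le_mul_left b (by omega)
    have h7 : b * (n - 1) = b * n - b := by
      rw [Nat.mul_sub, Nat.mul_one]
    have h8 : b * n - b + b = b * n := by
      have : b ≤ b * n := Nat.le_mul_of_pos_right b hn1
      omega
    rcases Nat.eq_zero_or_pos b with hb0 | hbpos
    · rw [hb0] at hA_le_b
      have hA0 : A = 0 := by omega
      rw [hA0] at hAs
      simp at hAs
      omega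
    · omega
  have hqd : n^2 ≤ q * d := by rw [hd]; exact Kstep_mul q n hq
  have hdb : n ≤ d * (b + 1) := by
    have h1 : n * n ≤ q * d := by
      have : n^2 = n * n := sq n
      omega
    have h2 : q * d < (n * (b+1)) * d :=
      (Nat.mul_lt_mul_right (by omega)).mpr (by omega)
    have h3 : n * n < n * ((b+1) * d) := by
      calc n * n ≤ q * d := h1
        _ < (n * (b+1)) * d := h2
        _ = n * ((b+1) * d) := by ring
    have h4 := Nat.lt_of_mul_lt_mul_left h3
    have h5 : (b+1) * d = d * (b+1) := Nat.mul_comm _ _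
    omega
  have hkey : (b + 1) * (n - d) ≤ q := by
    have hdn : d ≤ n := by omega
    have h1 : (b+1) * (n - d) = (b+1) * n - (b+1) * d := Nat.mul_sub _ _ _
    have h2 : (b+1) * n = b * n + n := by ring
    have h3 : n ≤ (b+1) * d := by
      have : (b+1) * d = d * (b+1) := Nat.mul_comm _ _
      omega
    omega
  have hb' : b + 1 ≤ q / (n - d) := (Nat.le_div_iff_mul_le hnd1).mpr hkey
  have hIH := IH (n - d) (by omega)
  rw [← hA] at hIH
  have hmono : A - q/(n-d) ≤ A - (b+1) := Nat.sub_le_sub_left hb' A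
  omega

open Finset in
/-- Averaging: some shift `c` matches at least `Kstep q n` elements of `V` into `U`. -/
lemma exists_good_shift {G : Type*} [AddCommGroup G] [Fintype G] [DecidableEq G]
    (V U : Finset G) (n : ℕ) (hV : V.card = n) (hU : U.card = n) (hn : 0 < n) :
    ∃ c : G, Kstep (Fintype.card G) n ≤ (V.filter (fun v => v + c ∈ U)).card := by
  set q := Fintype.card G with hq
  have hq0 : 0 < q := Fintype.card_pos
  have hsum : ∑ c : G, (V.filter (fun v => v + c ∈ U)).card = n^2 := by
    have h1 : ∀ c : G, (V.filter (fun v => v + c ∈ U)).card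
        = ∑ v ∈ V, if v + c ∈ U then 1 else 0 := fun c => Finset.card_filter _ _
    simp only [h1]
    rw [Finset.sum_comm]
    have h2 : ∀ v : G, ∑ c : G, (if v + c ∈ U then 1 else 0) = n := by
      intro v
      have h3 : ∑ c : G, (if v + c ∈ U then 1 else 0)
          = (univ.filter (fun c => v + c ∈ U)).card := (Finset.card_filter _ _).symm
      rw [h3]
      have h4 : univ.filter (fun c => v + c ∈ U) = U.image (fun u => u - v) := by
        ext c
        simp only [Finset.mem_filter, Finset.mem_univ, true_and, Finset.mem_image]
        constructor
        · intro hc; exact ⟨v + c, hc, by abel⟩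
        · rintro ⟨u, hu, rfl⟩
          simpa using hu
      rw [h4, Finset.card_image_of_injective _ (sub_left_injective), hU]
    calc ∑ v ∈ V, ∑ c : G, (if v + c ∈ U then 1 else 0) = ∑ v ∈ V, n := by
          exact Finset.sum_congr rfl (fun v _ => h2 v)
      _ = n^2 := by rw [Finset.sum_const, hV, smul_eq_mul, sq]
  by_contra hcon
  push_neg at hcon
  have hle : ∀ c : G, (V.filter (fun v => v + c ∈ U)).card ≤ Kstep q n - 1 :=
    fun c => by have := hcon c; omega
  have hsum2 : ∑ c : G, (V.filter (fun v => v + c ∈ U)).card ≤ q * (Kstep q n - 1) := by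
    calc ∑ c : G, (V.filter (fun v => v + c ∈ U)).card ≤ ∑ _c : G, (Kstep q n - 1) :=
          Finset.sum_le_sum (fun c _ => hle c)
      _ = q * (Kstep q n - 1) := by rw [Finset.sum_const, smul_eq_mul, hq]; simp
  have hlt : q * (Kstep q n - 1) < n^2 := by
    rcases le_or_gt ((n^2 + q - 1)/q) 1 with h | h
    · have : Kstep q n = 1 := by unfold Kstep; omega
      rw [this]
      simp
      positivity
    · have hK : Kstep q n = (n^2 + q - 1)/q := by unfold Kstep; omega
      obtain ⟨t, ht⟩ : ∃ t, t = (n^2 + q - 1)/q := ⟨_, rfl⟩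
      have h1 : q * ((n^2 + q - 1)/q) + (n^2 + q - 1) % q = n^2 + q - 1 := Nat.div_add_mod _ _
      have h2 : (n^2 + q - 1) % q < q := Nat.mod_lt _ hq0
      rw [← ht] at h1 h
      rw [hK, ← ht]
      have h3 : q * (t - 1) + q = q * t := by
        have : q * (t-1) = q * t - q := by rw [Nat.mul_sub, Nat.mul_one]
        have h4 : q ≤ q * t := Nat.le_mul_of_pos_right q (by omega)
        omega
      omega
  omega

open Finset in
/-- The greedy matching lemma: two `n`-subsets of `G` can be matched by a map that is a
translation on each of at most `Kfun q n` pieces. -/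
lemma exists_matching_s4 {G : Type*} [AddCommGroup G] [Fintype G] [DecidableEq G] :
    ∀ (n : ℕ) (V U : Finset G), V.card = n → U.card = n →
    ∃ ψ : G → G, Set.InjOn ψ ↑V ∧ V.image ψ = U ∧
      (V.image (fun v => ψ v - v)).card ≤ Kfun (Fintype.card G) n := by
  intro n
  induction n using Nat.strong_induction_on with
  | _ n IH =>
  intro V U hV hU
  rcases Nat.eq_zero_or_pos n with h0 | hpos
  · subst h0
    rw [Finset.card_eq_zero] at hV hU
    subst hV; subst hU
    exact ⟨id, by simp, by simp, by simp [Kfun_zero]⟩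
  obtain ⟨c, hc⟩ := exists_good_shift V U n hV hU hpos
  set q := Fintype.card G with hq
  have hd1 : 1 ≤ Kstep q n := Kstep_pos q n
  obtain ⟨W, hWsub, hWcard⟩ := Finset.exists_subset_card_eq hc
  have hWV : W ⊆ V := hWsub.trans (Finset.filter_subset _ _)
  have hWU : ∀ w ∈ W, w + c ∈ U := fun w hw => (Finset.mem_filter.mp (hWsub hw)).2
  have hdn : Kstep q n ≤ n := by
    rw [← hWcard, ← hV]; exact Finset.card_le_card hWV
  have hV' : (V \ W).card = n - Kstep q n := by
    rw [Finset.card_sdiff_of_subset hWV, hV, hWcard]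
  have hWcU : W.image (fun w => w + c) ⊆ U := by
    intro u hu
    obtain ⟨w, hw, rfl⟩ := Finset.mem_image.mp hu
    exact hWU w hw
  have hWc_card : (W.image (fun w => w + c)).card = Kstep q n := by
    rw [Finset.card_image_of_injective _ (add_left_injective c), hWcard]
  have hU' : (U \ W.image (fun w => w + c)).card = n - Kstep q n := by
    rw [Finset.card_sdiff_of_subset hWcU, hU, hWc_card]
  obtain ⟨ψ', hinj', himg', hcard'⟩ := IH (n - Kstep q n) (by omega) _ _ hV' hU'
  refine ⟨fun x => if x ∈ W then x + c else ψ' x, ?_, ?_, ?_⟩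
  · -- injectivity
    intro x hx y hy hxy
    simp only [Finset.mem_coe] at hx hy
    by_cases hxW : x ∈ W <;> by_cases hyW : y ∈ W <;> simp only [hxW, hyW, if_pos, if_neg,
      if_true, if_false] at hxy
    · exact add_right_cancel hxy
    · exfalso
      have hyV' : y ∈ V \ W := Finset.mem_sdiff.mpr ⟨hy, hyW⟩
      have : ψ' y ∈ U \ W.image (fun w => w + c) := by
        rw [← himg']; exact Finset.mem_image_of_mem _ hyV'
      rw [← hxy] at this
      exact (Finset.mem_sdiff.mp this).2 (Finset.mem_image_of_mem _ hxW)
    · exfalso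
      have hxV' : x ∈ V \ W := Finset.mem_sdiff.mpr ⟨hx, hxW⟩
      have : ψ' x ∈ U \ W.image (fun w => w + c) := by
        rw [← himg']; exact Finset.mem_image_of_mem _ hxV'
      rw [hxy] at this
      exact (Finset.mem_sdiff.mp this).2 (Finset.mem_image_of_mem _ hyW)
    · exact hinj' (Finset.mem_coe.mpr (Finset.mem_sdiff.mpr ⟨hx, hxW⟩))
        (Finset.mem_coe.mpr (Finset.mem_sdiff.mpr ⟨hy, hyW⟩)) hxy
  · -- image
    have hVsplit : V = W ∪ (V \ W) := by
      rw [Finset.union_sdiff_of_subset hWV]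
    rw [hVsplit, Finset.image_union]
    have h1 : W.image (fun x => if x ∈ W then x + c else ψ' x) = W.image (fun w => w + c) :=
      Finset.image_congr (fun w hw => by simp only [Finset.mem_coe] at hw; simp [hw])
    have h2 : (V \ W).image (fun x => if x ∈ W then x + c else ψ' x) = (V \ W).image ψ' :=
      Finset.image_congr (fun w hw => by
        simp only [Finset.mem_coe] at hw
        have := (Finset.mem_sdiff.mp hw).2; simp [this])
    rw [h1, h2, himg', Finset.union_sdiff_of_subset hWcU]
  · -- difference card
    have hsub : V.image (fun v => (if v ∈ W then v + c else ψ' v) - v)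
        ⊆ insert c ((V \ W).image (fun v => ψ' v - v)) := by
      intro z hz
      obtain ⟨v, hv, rfl⟩ := Finset.mem_image.mp hz
      by_cases hvW : v ∈ W
      · simp [hvW]
      · rw [Finset.mem_insert]
        right
        rw [if_neg hvW]
        exact Finset.mem_image_of_mem _ (Finset.mem_sdiff.mpr ⟨hv, hvW⟩)
    calc (V.image (fun v => (if v ∈ W then v + c else ψ' v) - v)).card
        ≤ (insert c ((V \ W).image (fun v => ψ' v - v))).card := Finset.card_le_card hsub
      _ ≤ 1 + ((V \ W).image (fun v => ψ' v - v)).card := by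
          rw [add_comm]; exact Finset.card_insert_le _ _
      _ ≤ 1 + Kfun q (n - Kstep q n) := by omega
      _ = Kfun q n := (Kfun_pos_eq q n hpos).symm

set_option maxHeartbeats 1000000 in
/-- The numeric estimate: `(1 + Kfun q ((q-1)/2))² < 4(q-1)` for odd `q ≥ 3`. -/
lemma numeric_bound (q : ℕ) (hodd : q % 2 = 1) (hq3 : 3 ≤ q) :
    (1 + Kfun q ((q-1)/2))^2 < 4*(q-1) := by
  have hq0 : 0 < q := by omega
  obtain ⟨n0, hn0def⟩ : ∃ n0, n0 = (q-1)/2 := ⟨_, rfl⟩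
  have hn0 : 0 < n0 := by omega
  have h2n0 : 2*n0 = q - 1 := by omega
  rw [← hn0def, Kfun_pos_eq q n0 hn0]
  obtain ⟨d0, hd0def⟩ : ∃ d0, d0 = Kstep q n0 := ⟨_, rfl⟩
  rw [← hd0def]
  obtain ⟨n1, hn1def⟩ : ∃ n1, n1 = n0 - d0 := ⟨_, rfl⟩
  rw [← hn1def]
  have hqd : n0^2 ≤ q * d0 := hd0def ▸ Kstep_mul q n0 hq0
  have hd0n0 : d0 ≤ n0 := by
    rw [hd0def]
    have h1 : (n0^2 + q - 1)/q ≤ n0 := by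
      have h2 : n0 * n0 ≤ n0 * q := Nat.mul_le_mul_left n0 (by omega)
      have h3 : n0^2 = n0 * n0 := sq n0
      have h4 : (n0+1) * q = n0 * q + q := by ring
      have h5 : n0 * q = q * n0 := Nat.mul_comm _ _
      rw [Nat.div_le_iff_le_mul_add_pred hq0]
      omega
    unfold Kstep
    omega
  have hn1sum : n1 + d0 = n0 := by omega
  have hf3 : 4 * n1 < q := by
    have c1 : (n1:ℤ) + d0 = n0 := by exact_mod_cast hn1sum
    have c2 : 2*(n0:ℤ) = q - 1 := by
      have h := h2n0
      zify [(by omega : 1 ≤ q)] at h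
      linarith
    have c3 : (n0:ℤ)^2 ≤ q*d0 := by exact_mod_cast hqd
    have c4 : (0:ℤ) < q := by exact_mod_cast hq0
    have h5 : (4:ℤ)*q*n1 ≤ q*q - 1 := by nlinarith [c1, c2, c3]
    have h6 : (4:ℤ)*n1 < q := by
      by_contra hcon
      push_neg at hcon
      nlinarith [mul_le_mul_of_nonneg_left hcon (le_of_lt c4)]
    exact_mod_cast h6
  rcases Nat.lt_or_ge n1 2 with hn1small | hn1big
  · interval_cases n1
    · rw [Kfun_zero]; omega
    · have hK1 : Kfun q 1 = 1 := by
        rw [Kfun_pos_eq q 1 (by omega)]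
        have : Kstep q 1 = 1 := by
          unfold Kstep
          rw [show 1^2 + q - 1 = q by omega, Nat.div_self hq0]
          simp
        rw [this]
        simp [Kfun_zero]
      rw [hK1]
      have : q ≥ 5 := by omega
      omega
  -- main case : n1 ≥ 2, q ≥ 9
  have hq9 : 9 ≤ q := by omega
  obtain ⟨a, hadef⟩ : ∃ a, a = Nat.sqrt q := ⟨_, rfl⟩
  have ha2 : a * a ≤ q := hadef ▸ Nat.sqrt_le q
  have hqa : q < (a+1) * (a+1) := hadef ▸ Nat.lt_succ_sqrt q
  have ha3 : 3 ≤ a := hadef ▸ (Nat.le_sqrt.mpr (by omega))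
  have hb4 : 4 ≤ q / n1 := (Nat.le_div_iff_mul_le (by omega)).mpr (by omega)
  have hC := Kfun_le_claimC q a hq0 (by omega) n1
  obtain ⟨A, hAdef⟩ : ∃ A, A = (q + a - 1)/a := ⟨_, rfl⟩
  have hAdef2 := hAdef
  rw [← hAdef] at hC
  have hT : Kfun q n1 ≤ a + (A - 4) := by
    have := Nat.sub_le_sub_left hb4 A
    omega
  have hsq1 : (a+1)*(a+1) = a*a + 2*a + 1 := by ring
  have hA2 : A ≤ a + 2 := by
    rw [hAdef]
    rw [Nat.div_le_iff_le_mul_add_pred (by omega)]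
    have h1 : (a+2)*a = a*a + 2*a := by ring
    have h1b : a*(a+2) = a*a + 2*a := by ring
    omega
  clear hAdef hadef hd0def hn0def hn1def
  rcases Nat.lt_or_ge (a*a + 1) q with hcase1 | hrest
  · -- q ≥ a² + 2
    have hTa : 1 + (1 + Kfun q n1) ≤ 2*a := by omega
    calc (1 + (1 + Kfun q n1))^2 ≤ (2*a)^2 := Nat.pow_le_pow_left hTa 2
      _ = 4*(a*a) := by ring
      _ < 4*(q-1) := by omega
  rcases Nat.lt_or_ge (a*a) q with hcase2 | hcase3
  · -- q = a² + 1
    have hqeq : q = a*a + 1 := by omega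
    have hA1 : A ≤ a + 1 := by
      have h2 : (a+1)*a = a*a + a := by ring
      have h2b : a*(a+1) = a*a + a := by ring
      rw [hAdef2, Nat.div_le_iff_le_mul_add_pred (by omega)]
      omega
    have hTa : 1 + (1 + Kfun q n1) ≤ 2*a - 1 := by omega
    calc (1 + (1 + Kfun q n1))^2 ≤ (2*a-1)^2 := Nat.pow_le_pow_left hTa 2
      _ < 4*(a*a) := by
          zify [(show (1:ℕ) ≤ 2*a by omega)]
          nlinarith [ha3]
      _ ≤ 4*(q-1) := by omega
  · -- q ≤ a², so q = a²
    have hqeq : q = a*a := by omega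
    have hA0 : A ≤ a := by
      have h2 : (a+1)*a = a*a + a := by ring
      have h2b : a*(a+1) = a*a + a := by ring
      rw [hAdef2, Nat.div_le_iff_le_mul_add_pred (by omega)]
      omega
    rcases Nat.lt_or_ge a 4 with ha4 | ha4
    · -- a = 3, q = 9
      have ha : a = 3 := by omega
      rw [ha] at hqeq
      norm_num at hqeq
      have hTa : 1 + (1 + Kfun q n1) ≤ 5 := by omega
      calc (1 + (1 + Kfun q n1))^2 ≤ 5^2 := Nat.pow_le_pow_left hTa 2
        _ < 4*(q-1) := by rw [hqeq]; norm_num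
    · have hTa : 1 + (1 + Kfun q n1) ≤ 2*a - 2 := by omega
      calc (1 + (1 + Kfun q n1))^2 ≤ (2*a-2)^2 := Nat.pow_le_pow_left hTa 2
        _ < 4*(q-1) := by
            rw [hqeq]
            zify [(show (2:ℕ) ≤ 2*a by omega), (show (1:ℕ) ≤ a*a by nlinarith [ha3])]
            nlinarith [ha3]

/-- For the squaring map over a finite field of odd order `q`,
`pres(x²) ≤ ⌈2√(q−1)⌉ − 1`. -/
theorem pres_sq_le {F : Type*} [Field F] [Fintype F] [DecidableEq F]
    (hq : Odd (Fintype.card F)) :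
    (pres (fun x : F => x ^ 2) : ℤ) ≤ ⌈2 * Real.sqrt ((Fintype.card F : ℝ) - 1)⌉ - 1 := by
  classical
  obtain ⟨q, hqdef⟩ : ∃ q, q = Fintype.card F := ⟨_, rfl⟩
  have hodd : q % 2 = 1 := by rw [hqdef]; exact Nat.odd_iff.mp hq
  have hq2 : 2 ≤ q := by rw [hqdef]; exact Fintype.one_lt_card
  have hq3 : 3 ≤ q := by omega
  have hchar : ringChar F ≠ 2 := by
    intro h
    have h2 := FiniteField.even_card_of_char_two h
    rw [← hqdef] at h2
    omega
  have h2F : (2:F) ≠ 0 := Ring.two_ne_zero hchar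
  have hneg : ∀ y : F, y ≠ 0 → y ≠ -y := by
    intro y hy hcon
    have : (2:F) * y = 0 := by
      rw [two_mul]
      nth_rewrite 2 [hcon]
      exact add_neg_cancel y
    rcases mul_eq_zero.mp this with h | h
    · exact h2F h
    · exact hy h
  -- the squares
  obtain ⟨Q, hQdef⟩ : ∃ Q : Finset F, Q = Finset.univ.image (fun x : F => x^2) := ⟨_, rfl⟩
  obtain ⟨S, hSdef⟩ : ∃ S : Finset F, S = Q.erase 0 := ⟨_, rfl⟩
  obtain ⟨U, hUdef⟩ : ∃ U : Finset F, U = Finset.univ \ Q := ⟨_, rfl⟩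
  have hmemQ : ∀ x : F, x^2 ∈ Q := fun x => by
    rw [hQdef]; exact Finset.mem_image_of_mem _ (Finset.mem_univ x)
  have hQ0 : (0:F) ∈ Q := by
    have := hmemQ 0; rwa [show (0:F)^2 = 0 by ring] at this
  have hx2S : ∀ x : F, x ≠ 0 → x^2 ∈ S := fun x hx => by
    rw [hSdef]; exact Finset.mem_erase.mpr ⟨pow_ne_zero 2 hx, hmemQ x⟩
  have hUQ : ∀ u ∈ U, u ∉ Q := fun u hu => by
    rw [hUdef] at hu; exact (Finset.mem_sdiff.mp hu).2
  have hex : ∀ b ∈ Q, ∃ x : F, x^2 = b := by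
    intro b hb
    rw [hQdef] at hb
    obtain ⟨x, _, hx⟩ := Finset.mem_image.mp hb
    exact ⟨x, hx⟩
  -- fibers
  have hfiber0 : (Finset.univ.filter (fun x : F => x^2 = 0)) = {0} := by
    ext x
    simp [pow_eq_zero_iff]
  have hfiberS : ∀ b ∈ S, (Finset.univ.filter (fun x : F => x^2 = b)).card = 2 := by
    intro b hb
    rw [hSdef] at hb
    obtain ⟨hb0, hbQ⟩ := Finset.mem_erase.mp hb
    obtain ⟨y, hy⟩ := hex b hbQ
    have hy0 : y ≠ 0 := by
      intro hcon; rw [hcon] at hy; apply hb0; rw [← hy]; ring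
    have : (Finset.univ.filter (fun x : F => x^2 = b)) = {y, -y} := by
      ext x
      simp only [Finset.mem_filter, Finset.mem_univ, true_and, Finset.mem_insert,
        Finset.mem_singleton]
      rw [← hy]
      exact sq_eq_sq_iff_eq_or_eq_neg
    rw [this, Finset.card_insert_of_notMem (by simpa using hneg y hy0), Finset.card_singleton]
  have hcardsum : q = ∑ b ∈ Q, (Finset.univ.filter (fun x : F => x^2 = b)).card := by
    rw [hqdef, ← Finset.card_univ]
    exact Finset.card_eq_sum_card_fiberwise (fun x _ => hmemQ x)
  have hScard : S.card = (q-1)/2 := by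
    have h1 : ∑ b ∈ Q, (Finset.univ.filter (fun x : F => x^2 = b)).card
        = (∑ b ∈ Q.erase 0, (Finset.univ.filter (fun x : F => x^2 = b)).card)
          + (Finset.univ.filter (fun x : F => x^2 = 0)).card :=
      (Finset.sum_erase_add Q _ hQ0).symm
    have h2 : ∑ b ∈ Q.erase 0, (Finset.univ.filter (fun x : F => x^2 = b)).card
        = 2 * S.card := by
      rw [← hSdef, Finset.sum_congr rfl (fun b hb => hfiberS b hb), Finset.sum_const,
        smul_eq_mul, Nat.mul_comm]
    rw [h1, h2, hfiber0, Finset.card_singleton] at hcardsum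
    omega
  have hQcard : Q.card = S.card + 1 := by
    rw [hSdef] at hScard ⊢
    have := Finset.card_erase_of_mem hQ0
    have hQpos : 1 ≤ Q.card := Finset.card_pos.mpr ⟨0, hQ0⟩
    omega
  have hUcard : U.card = (q-1)/2 := by
    rw [hUdef, Finset.card_sdiff_of_subset (Finset.subset_univ Q), Finset.card_univ, ← hqdef]
    omega
  -- matching
  obtain ⟨ψ, hψinj, hψimg, hψcard⟩ := exists_matching_s4 ((q-1)/2) S U hScard hUcard
  rw [← hqdef] at hψcard
  have hψU : ∀ s ∈ S, ψ s ∈ U := fun s hs => by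
    rw [← hψimg]; exact Finset.mem_image_of_mem _ hs
  -- root chooser
  choose! r hr using hex
  -- the permutation
  obtain ⟨Φ, hΦdef⟩ : ∃ Φ : F → F,
      Φ = fun x => if x = 0 then 0 else if x = r (x^2) then x^2 else ψ (x^2) := ⟨_, rfl⟩
  have hroot : ∀ x : F, x ≠ 0 → r (x^2) = x ∨ r (x^2) = -x := by
    intro x hx
    have h1 : (r (x^2))^2 = x^2 := hr (x^2) (hmemQ x)
    exact sq_eq_sq_iff_eq_or_eq_neg.mp h1
  have hΦinj : Function.Injective Φ := by
    intro x y hxy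
    rw [hΦdef] at hxy
    simp only at hxy
    by_cases hx0 : x = 0 <;> by_cases hy0 : y = 0
    · rw [hx0, hy0]
    · exfalso
      rw [if_pos hx0, if_neg hy0] at hxy
      by_cases hyr : y = r (y^2)
      · rw [if_pos hyr] at hxy
        exact pow_ne_zero 2 hy0 hxy.symm
      · rw [if_neg hyr] at hxy
        have := hψU (y^2) (hx2S y hy0)
        rw [← hxy] at this
        exact hUQ 0 this hQ0
    · exfalso
      rw [if_pos hy0, if_neg hx0] at hxy
      by_cases hxr : x = r (x^2)
      · rw [if_pos hxr] at hxy
        exact pow_ne_zero 2 hx0 hxy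
      · rw [if_neg hxr] at hxy
        have := hψU (x^2) (hx2S x hx0)
        rw [hxy] at this
        exact hUQ 0 this hQ0
    · rw [if_neg hx0, if_neg hy0] at hxy
      by_cases hxr : x = r (x^2) <;> by_cases hyr : y = r (y^2)
      · rw [if_pos hxr, if_pos hyr] at hxy
        rw [hxr, hxy, ← hyr]
      · exfalso
        rw [if_pos hxr, if_neg hyr] at hxy
        have := hψU (y^2) (hx2S y hy0)
        rw [← hxy] at this
        exact hUQ _ this (hmemQ x)
      · exfalso
        rw [if_neg hxr, if_pos hyr] at hxy
        have := hψU (x^2) (hx2S x hx0)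
        rw [hxy] at this
        exact hUQ _ this (hmemQ y)
      · rw [if_neg hxr, if_neg hyr] at hxy
        have hsq : x^2 = y^2 :=
          hψinj (Finset.mem_coe.mpr (hx2S x hx0)) (Finset.mem_coe.mpr (hx2S y hy0)) hxy
        rcases sq_eq_sq_iff_eq_or_eq_neg.mp hsq with h | h
        · exact h
        · exfalso
          rcases hroot x hx0 with hrx | hrx
          · exact hxr hrx.symm
          · apply hyr
            rw [← hsq, hrx, h, neg_neg]
  have hΦbij : Function.Bijective Φ := Finite.injective_iff_bijective.mp hΦinj
  obtain ⟨g, hgdef⟩ : ∃ g : F → F, g = fun x => Φ x - x^2 := ⟨_, rfl⟩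
  have hgΦ : (fun x : F => g x + (fun x : F => x ^ 2) x) = Φ := by
    funext x
    rw [hgdef]
    simp
  have hmem : imCard g ∈ {n | ∃ g' : F → F,
      Function.Bijective (fun x => g' x + (fun x : F => x ^ 2) x) ∧ imCard g' = n} :=
    ⟨g, by rw [hgΦ]; exact hΦbij, rfl⟩
  have hpres : pres (fun x : F => x ^ 2) ≤ imCard g := Nat.sInf_le hmem
  have hsub : Finset.univ.image g ⊆ insert 0 (S.image (fun v => ψ v - v)) := by
    intro z hz
    obtain ⟨x, _, rfl⟩ := Finset.mem_image.mp hz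
    rw [hgdef, hΦdef]
    simp only
    by_cases hx0 : x = 0
    · rw [if_pos hx0, hx0]
      simp
    by_cases hxr : x = r (x^2)
    · rw [if_neg hx0, if_pos hxr]
      simp
    · rw [if_neg hx0, if_neg hxr]
      exact Finset.mem_insert.mpr (Or.inr (Finset.mem_image_of_mem _ (hx2S x hx0)))
  have himCard : imCard g ≤ 1 + Kfun q ((q-1)/2) := by
    unfold imCard
    calc (Finset.univ.image g).card ≤ (insert (0:F) (S.image (fun v => ψ v - v))).card :=
          Finset.card_le_card hsub
      _ ≤ 1 + (S.image (fun v => ψ v - v)).card := by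
          rw [Nat.add_comm]; exact Finset.card_insert_le _ _
      _ ≤ 1 + Kfun q ((q-1)/2) := by omega
  have hnum := numeric_bound q hodd hq3
  obtain ⟨T, hTdef⟩ : ∃ T, T = 1 + Kfun q ((q-1)/2) := ⟨_, rfl⟩
  rw [← hTdef] at himCard hnum
  have hceil : (T:ℤ) < ⌈2 * Real.sqrt ((Fintype.card F : ℝ) - 1)⌉ := by
    rw [Int.lt_ceil]
    have hqcast : ((Fintype.card F : ℝ)) - 1 = ((q - 1 : ℕ) : ℝ) := by
      rw [← hqdef]
      push_cast [Nat.cast_sub (by omega : 1 ≤ q)]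
      ring
    rw [hqcast]
    have h2 : ((T:ℝ))^2 < 4*((q-1:ℕ):ℝ) := by exact_mod_cast hnum
    have h3 : (T:ℝ) < Real.sqrt (4*((q-1:ℕ):ℝ)) :=
      (Real.lt_sqrt (by positivity)).mpr h2
    have h5 : Real.sqrt 4 = 2 := by
      rw [show (4:ℝ) = 2^2 by norm_num, Real.sqrt_sq (by norm_num : (0:ℝ) ≤ 2)]
    rw [Real.sqrt_mul (by norm_num : (0:ℝ) ≤ 4) _, h5] at h3
    exact_mod_cast h3
  have hfinal : (imCard g : ℤ) ≤ (T:ℤ) := by exact_mod_cast himCard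
  have hp : (pres (fun x : F => x ^ 2) : ℤ) ≤ (imCard g : ℤ) := by exact_mod_cast hpres
  omega
end

section
/- Let G be a finite group, f : G → G, and let S be a k-subset of G with k ≥ u(f). Then the number of functions g : G → G such that (a) Im(g) = S and (b) g(x) ≠ g(y) whenever x ≠ y and f(x) = f(y), equals the number of admissible subtables of M_f with value set S multiplied by ∏_{t=1}^{u(f)} (t!)^{#P_t}, where P_t := {b ∈ G : #preim(f,b) = t}. -/
/-- The uniformity `u(f) = max_{b ∈ G} #preim(f,b)`. -/
def unif {G : Type*} [Fintype G] [DecidableEq G] (f : G → G) : ℕ :=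
  Finset.univ.sup (fun b => (preim f b).card)

/-- `P_t = {b ∈ G : #preim(f,b) = t}`. -/
def Pset {G : Type*} [Fintype G] [DecidableEq G] (f : G → G) (t : ℕ) : Finset G :=
  Finset.univ.filter (fun b => (preim f b).card = t)

/-- `A` is an admissible subtable of the subtraction table `M_f` with value set `S`:
the positions of `A` lie in `G × Im(f)`, the entry at position `(r,c)` is `r - c`,
(A1) `S` is the set of values of the entries of `A`, and
(A2) every column `c ∈ Im(f)` contains exactly `#preim(f,c)` positions of `A`. -/
def IsAdmissible {G : Type*} [AddGroup G] [Fintype G] [DecidableEq G]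
    (f : G → G) (A : Finset (G × G)) (S : Finset G) : Prop :=
  (∀ p ∈ A, p.2 ∈ Finset.univ.image f) ∧
  S = A.image (fun p => p.1 - p.2) ∧
  ∀ c ∈ Finset.univ.image f, (A.filter (fun p => p.2 = c)).card = (preim f c).card

open Finset

set_option linter.unusedSectionVars false

section Aux

variable {G : Type*} [AddGroup G] [Fintype G] [DecidableEq G]

lemma mem_preim' {f : G → G} {b x : G} : x ∈ preim f b ↔ f x = b := by
  simp [preim]

/-- The table of a function `g` relative to `f`. -/
def tabOf (f g : G → G) : Finset (G × G) :=
  Finset.univ.image (fun x => (g x + f x, f x))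

/-- The rows used in column `c` of a subtable. -/
def rowsOf (A : Finset (G × G)) (c : G) : Finset G :=
  (A.filter (fun p => p.2 = c)).image Prod.fst

lemma tab_map_inj {f g : G → G} (h : ∀ x y : G, x ≠ y → f x = f y → g x ≠ g y) :
    Function.Injective (fun x : G => (g x + f x, f x)) := by
  intro x y hxy
  simp only [Prod.mk.injEq] at hxy
  by_contra hne
  exact h x y hne hxy.2 (by
    have := hxy.1
    rw [hxy.2] at this
    exact add_right_cancel this)

lemma card_univ_eq_sum_preim (f : G → G) :
    Fintype.card G = ∑ c ∈ Finset.univ.image f, (preim f c).card := by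
  rw [← Finset.card_univ]
  exact Finset.card_eq_sum_card_fiberwise (fun x _ => Finset.mem_image_of_mem f (Finset.mem_univ x))

lemma card_admissible (f : G → G) {A : Finset (G × G)} {S : Finset G}
    (hA : IsAdmissible f A S) : A.card = Fintype.card G := by
  rw [Finset.card_eq_sum_card_fiberwise (f := Prod.snd) hA.1]
  rw [Finset.sum_congr rfl (fun c hc => hA.2.2 c hc)]
  exact (card_univ_eq_sum_preim f).symm

lemma tab_admissible {f g : G → G} {S : Finset G}
    (h1 : Finset.univ.image g = S) (h2 : ∀ x y : G, x ≠ y → f x = f y → g x ≠ g y) :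
    IsAdmissible f (tabOf f g) S := by
  refine ⟨?_, ?_, ?_⟩
  · intro p hp
    simp only [tabOf, Finset.mem_image] at hp
    obtain ⟨x, -, rfl⟩ := hp
    exact Finset.mem_image_of_mem f (Finset.mem_univ x)
  · rw [tabOf, Finset.image_image, ← h1]
    congr 1
    funext x
    simp [add_sub_cancel_right]
  · intro c hc
    rw [tabOf, Finset.filter_image]
    rw [Finset.card_image_of_injOn (Set.InjOn.mono (Set.subset_univ _)
      (Function.Injective.injOn (tab_map_inj h2)))]
    rfl

lemma rowsOf_card (f : G → G) {A : Finset (G × G)} {S : Finset G}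
    (hA : IsAdmissible f A S) (c : G) : (rowsOf A c).card = (preim f c).card := by
  by_cases hc : c ∈ Finset.univ.image f
  · rw [rowsOf, Finset.card_image_of_injOn, hA.2.2 c hc]
    intro p hp q hq hpq
    simp only [Finset.coe_filter, Set.mem_setOf_eq] at hp hq
    exact Prod.ext hpq (hp.2.trans hq.2.symm)
  · have h1 : A.filter (fun p => p.2 = c) = ∅ := by
      rw [Finset.filter_eq_empty_iff]
      intro p hp hpc
      exact hc (hpc ▸ hA.1 p hp)
    have h2 : preim f c = ∅ := by
      rw [Finset.eq_empty_iff_forall_notMem]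
      intro x hx
      exact hc ((mem_preim'.1 hx) ▸ Finset.mem_image_of_mem f (Finset.mem_univ x))
    rw [rowsOf, h1, h2]
    simp

/-- The key fiber count. -/
lemma fiber_card (f : G → G) {A : Finset (G × G)} {S : Finset G}
    (hA : IsAdmissible f A S) :
    (Finset.univ.filter (fun g : G → G =>
        (∀ x y : G, x ≠ y → f x = f y → g x ≠ g y) ∧ ∀ x : G, (g x + f x, f x) ∈ A)).card
      = ∏ c : G, ((preim f c).card).factorial := by
  classical
  rw [← Fintype.card_subtype]
  have E : {g : G → G // (∀ x y : G, x ≠ y → f x = f y → g x ≠ g y) ∧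
      ∀ x : G, (g x + f x, f x) ∈ A} ≃
      (∀ c : G, (↥(preim f c) ↪ ↥(rowsOf A c))) := by
    refine ⟨fun g c => ⟨fun x => ⟨g.1 x + c, ?_⟩, ?_⟩,
      fun F => ⟨fun x => (F (f x) ⟨x, mem_preim'.2 rfl⟩ : G) - f x, ?_, ?_⟩, ?_, ?_⟩
    · -- membership in rowsOf
      have hx : f (x : G) = c := mem_preim'.1 x.2
      have hm := g.2.2 (x : G)
      rw [hx] at hm
      simp only [rowsOf, Finset.mem_image, Finset.mem_filter]
      exact ⟨(g.1 x + c, c), ⟨hm, rfl⟩, rfl⟩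
    · -- injectivity on a column
      intro x y hxy
      simp only [Subtype.mk.injEq, add_left_inj] at hxy
      by_contra hne
      have hx : f (x : G) = c := mem_preim'.1 x.2
      have hy : f (y : G) = c := mem_preim'.1 y.2
      exact g.2.1 x y (fun h => hne (Subtype.ext h)) (hx.trans hy.symm) hxy
    · -- fiber injectivity of invFun
      intro x y hxy hf
      have key : ∀ (hy : y ∈ preim f (f y)) (hy' : y ∈ preim f (f x)),
          ((F (f y) ⟨y, hy⟩ : G)) = ((F (f x) ⟨y, hy'⟩ : G)) := by
        rw [hf]
        intro hy hy'
        rfl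
      intro hcontra
      dsimp only at hcontra
      rw [key (mem_preim'.2 rfl) (mem_preim'.2 hf.symm)] at hcontra
      set u : G := ((F (f x)) ⟨x, mem_preim'.2 rfl⟩ : G) with hu
      set v : G := ((F (f x)) ⟨y, mem_preim'.2 hf.symm⟩ : G) with hv
      rw [hf, sub_left_inj] at hcontra
      rw [hu, hv] at hcontra
      have := (F (f x)).injective (Subtype.ext hcontra)
      exact hxy (congrArg Subtype.val this)
    · -- membership of invFun table points
      intro x
      have hv := (F (f x) ⟨x, mem_preim'.2 rfl⟩).2
      simp only [rowsOf, Finset.mem_image, Finset.mem_filter] at hv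
      obtain ⟨p, ⟨hpA, hp2⟩, hp1⟩ := hv
      have hp : ((F (f x) ⟨x, mem_preim'.2 rfl⟩ : G) - f x + f x, f x) = p := by
        obtain ⟨p1, p2⟩ := p
        simp only [Prod.mk.injEq] at hp1 hp2 ⊢
        subst hp1; subst hp2
        exact ⟨sub_add_cancel _ _, rfl⟩
      rw [hp]
      exact hpA
    · -- left inverse
      intro g
      apply Subtype.ext
      funext x
      show g.1 x + f x - f x = g.1 x
      exact add_sub_cancel_right _ _
    · -- right inverse
      intro F
      funext c
      apply DFunLike.ext
      intro x
      apply Subtype.ext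
      obtain ⟨x, hx⟩ := x
      have hc : f x = c := mem_preim'.1 hx
      subst hc
      show (F (f x) ⟨x, hx⟩ : G) - f x + f x = (F (f x) ⟨x, hx⟩ : G)
      exact sub_add_cancel _ _
  rw [Fintype.card_congr E, Fintype.card_pi]
  refine Finset.prod_congr rfl (fun c _ => ?_)
  rw [Fintype.card_embedding_eq, Fintype.card_coe, Fintype.card_coe, rowsOf_card f hA c,
    Nat.descFactorial_self]

end Aux

section Aux2


variable {G : Type*} [AddGroup G] [Fintype G] [DecidableEq G]

lemma prod_factorial_eq (f : G → G) :
    (∏ c : G, ((preim f c).card).factorial)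
      = ∏ t ∈ Finset.Icc 1 (unif f), (Nat.factorial t) ^ (Pset f t).card := by
  classical
  have hmaps : ∀ c ∈ (Finset.univ : Finset G),
      (preim f c).card ∈ Finset.Icc 0 (unif f) := by
    intro c _
    rw [Finset.mem_Icc]
    exact ⟨Nat.zero_le _, Finset.le_sup (f := fun b => (preim f b).card) (Finset.mem_univ c)⟩
  rw [← Finset.prod_fiberwise_of_maps_to hmaps (fun c => ((preim f c).card).factorial)]
  rw [← Finset.prod_subset (Finset.Icc_subset_Icc_left (Nat.zero_le 1)) (by
    intro t ht hts
    have : t = 0 := by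
      rw [Finset.mem_Icc] at ht hts
      omega
    subst this
    refine Finset.prod_eq_one (fun c hc => ?_)
    rw [Finset.mem_filter] at hc
    rw [hc.2]
    rfl)]
  refine Finset.prod_congr rfl (fun t ht => ?_)
  have hcongr : ∀ c ∈ Finset.univ.filter (fun c => (preim f c).card = t),
      ((preim f c).card).factorial = t.factorial := by
    intro c hc
    rw [Finset.mem_filter] at hc
    rw [hc.2]
  rw [Finset.prod_congr rfl hcongr, Finset.prod_const]
  rfl

end Aux2

/-- The number of functions `g : G → G` with `Im(g) = S` which are injective on each
fiber of `f` equals the number of admissible subtables of `M_f` with value set `S`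
multiplied by `∏_{t=1}^{u(f)} (t!)^{#P_t}`. -/
theorem card_functions_eq_card_admissible_mul {G : Type*} [AddGroup G] [Fintype G]
    [DecidableEq G] (f : G → G) (S : Finset G) (k : ℕ)
    (hS : S.card = k) (hk : unif f ≤ k) :
    {g : G → G | Finset.univ.image g = S ∧
        ∀ x y : G, x ≠ y → f x = f y → g x ≠ g y}.ncard =
      {A : Finset (G × G) | IsAdmissible f A S}.ncard *
        ∏ t ∈ Finset.Icc 1 (unif f), (Nat.factorial t) ^ (Pset f t).card := by
  classical
  rw [Set.ncard_eq_toFinset_card', Set.toFinset_setOf,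
    Set.ncard_eq_toFinset_card', Set.toFinset_setOf]
  set T := Finset.univ.filter (fun g : G → G => Finset.univ.image g = S ∧
      ∀ x y : G, x ≠ y → f x = f y → g x ≠ g y) with hT
  set 𝒜 := Finset.univ.filter (fun A : Finset (G × G) => IsAdmissible f A S) with h𝒜
  have hmaps : ∀ g ∈ T, tabOf f g ∈ 𝒜 := by
    intro g hg
    rw [hT, Finset.mem_filter] at hg
    rw [h𝒜, Finset.mem_filter]
    exact ⟨Finset.mem_univ _, tab_admissible hg.2.1 hg.2.2⟩
  rw [Finset.card_eq_sum_card_fiberwise hmaps]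
  have hfib : ∀ A ∈ 𝒜, (T.filter (fun g => tabOf f g = A)).card
      = ∏ c : G, ((preim f c).card).factorial := by
    intro A hA
    rw [h𝒜, Finset.mem_filter] at hA
    have hset : T.filter (fun g => tabOf f g = A) = Finset.univ.filter (fun g : G → G =>
        (∀ x y : G, x ≠ y → f x = f y → g x ≠ g y) ∧ ∀ x : G, (g x + f x, f x) ∈ A) := by
      ext g
      rw [Finset.mem_filter, hT, Finset.mem_filter, Finset.mem_filter]
      constructor
      · rintro ⟨⟨-, hgS, hginj⟩, htab⟩
        refine ⟨Finset.mem_univ _, hginj, fun x => htab ▸ ?_⟩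
        exact Finset.mem_image_of_mem _ (Finset.mem_univ x)
      · rintro ⟨-, hginj, hmem⟩
        have htab : tabOf f g = A := by
          apply Finset.eq_of_subset_of_card_le
          · intro p hp
            simp only [tabOf, Finset.mem_image] at hp
            obtain ⟨x, -, rfl⟩ := hp
            exact hmem x
          · rw [card_admissible f hA.2, tabOf,
              Finset.card_image_of_injective _ (tab_map_inj hginj), Finset.card_univ]
        refine ⟨⟨Finset.mem_univ _, ?_, hginj⟩, htab⟩
        have himg : Finset.univ.image g = (tabOf f g).image (fun p => p.1 - p.2) := by
          rw [tabOf, Finset.image_image]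
          congr 1
          funext x
          simp [add_sub_cancel_right]
        rw [himg, htab]
        exact hA.2.2.1.symm
    rw [hset, fiber_card f hA.2]
  rw [Finset.sum_congr rfl hfib, Finset.sum_const, smul_eq_mul, prod_factorial_eq f]
end

section
/- Let G be a finite group, f : G → G, and let g : G → G satisfy g(x) ≠ g(y) whenever x ≠ y and f(x) = f(y). Then the set of positions A := {(g(x) + f(x), f(x)) : x ∈ G} ⊆ G × Im(f) is an admissible subtable of M_f with value set Im(g), and range(A) = Im(g + f), where (g+f)(x) := g(x) + f(x). -/
/-- If `g` is injective on each fiber of `f`, then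
`A = {(g(x) + f(x), f(x)) : x ∈ G}` is an admissible subtable of `M_f` with value set
`Im(g)`, and `range(A) = Im(g + f)`. -/
theorem isAdmissible_of_fiber_injective {G : Type*} [AddGroup G] [Fintype G]
    [DecidableEq G] (f g : G → G)
    (hg : ∀ x y : G, x ≠ y → f x = f y → g x ≠ g y) :
    IsAdmissible f (Finset.univ.image (fun x => (g x + f x, f x)))
        (Finset.univ.image g) ∧
      (Finset.univ.image (fun x => (g x + f x, f x))).image Prod.fst =
        Finset.univ.image (fun x => g x + f x) := by
  have hinj : Function.Injective (fun x => (g x + f x, f x)) := by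
    intro x y hxy
    simp only [Prod.mk.injEq] at hxy
    by_contra hne
    exact hg x y hne hxy.2 (by have := hxy.1; rwa [hxy.2, add_left_inj] at this)
  refine ⟨⟨?_, ?_, ?_⟩, ?_⟩
  · rintro p hp
    simp only [Finset.mem_image, Finset.mem_univ, true_and] at hp ⊢
    obtain ⟨x, rfl⟩ := hp
    exact ⟨x, rfl⟩
  · rw [Finset.image_image]
    congr 1
    ext x
    simp [add_sub_cancel_right]
  · intro c hc
    have : (Finset.univ.image (fun x => (g x + f x, f x))).filter (fun p => p.2 = c)
        = (preim f c).image (fun x => (g x + f x, f x)) := by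
      ext p
      simp only [Finset.mem_filter, Finset.mem_image, preim, Finset.mem_univ, true_and]
      constructor
      · rintro ⟨⟨x, rfl⟩, h⟩; exact ⟨x, h, rfl⟩
      · rintro ⟨x, hx, rfl⟩; exact ⟨⟨x, rfl⟩, hx⟩
    rw [this, Finset.card_image_of_injective _ hinj]
  · rw [Finset.image_image]
    rfl
end

section
/- Let G be a finite group, f : G → G, and k a positive integer. Then pres(f) ≤ k if and only if there exists an admissible subtable A of M_f whose range is all of G and whose value set has cardinality at most k. -/
/-- `pres(f) ≤ k` iff there is an admissible subtable of `M_f` whose range is all of `G`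
and whose value set has cardinality at most `k`. -/
theorem pres_le_iff_exists_admissible {G : Type*} [AddGroup G] [Fintype G]
    [DecidableEq G] (f : G → G) (k : ℕ) (hk : 0 < k) :
    pres f ≤ k ↔ ∃ (A : Finset (G × G)) (S : Finset G),
      IsAdmissible f A S ∧ A.image Prod.fst = Finset.univ ∧ S.card ≤ k := by
  classical
  constructor
  · intro h
    have hne : {n | ∃ g : G → G, Function.Bijective (fun x => g x + f x) ∧ imCard g = n}.Nonempty := by
      refine ⟨_, fun x => x - f x, ?_, rfl⟩
      have h1 : (fun x : G => (x - f x) + f x) = id := by funext x; simp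
      rw [h1]; exact Function.bijective_id
    obtain ⟨g, hbij, hcard⟩ := Nat.sInf_mem hne
    have hk' : imCard g ≤ k := by rw [hcard]; exact h
    have hminj : Function.Injective (fun x : G => (g x + f x, f x)) := by
      intro x y hxy
      exact hbij.injective (congrArg Prod.fst hxy)
    refine ⟨Finset.univ.image (fun x => (g x + f x, f x)), Finset.univ.image g, ⟨?_, ?_, ?_⟩, ?_, hk'⟩
    · intro p hp
      simp only [Finset.mem_image, Finset.mem_univ, true_and] at hp ⊢
      obtain ⟨x, hx⟩ := hp
      exact ⟨x, by rw [← hx]⟩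
    · rw [Finset.image_image]
      congr 1
      funext x
      simp
    · intro c hc
      rw [Finset.filter_image, Finset.card_image_of_injective _ hminj]
      simp [preim]
    · rw [Finset.image_image]
      apply Finset.image_univ_of_surjective
      intro r
      obtain ⟨x, hx⟩ := hbij.surjective r
      exact ⟨x, hx⟩
  · rintro ⟨A, S, ⟨hA2, hS, hcols⟩, hrange, hSk⟩
    have hcard : ∀ c : G, (preim f c).card = (A.filter (fun p => p.2 = c)).card := by
      intro c
      by_cases hc : c ∈ Finset.univ.image f
      · exact (hcols c hc).symm
      · have h1 : preim f c = ∅ := by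
          rw [preim, Finset.filter_eq_empty_iff]
          intro x _ hx
          exact hc (Finset.mem_image.mpr ⟨x, Finset.mem_univ x, hx⟩)
        have h2 : A.filter (fun p => p.2 = c) = ∅ := by
          rw [Finset.filter_eq_empty_iff]
          intro p hp hpc
          exact hc (hpc ▸ hA2 p hp)
        rw [h1, h2]; rfl
    have hcardA : A.card = (Finset.univ : Finset G).card := by
      rw [Finset.card_eq_sum_card_fiberwise (f := Prod.snd) (t := Finset.univ.image f) hA2,
        Finset.card_eq_sum_card_fiberwise (f := f) (t := Finset.univ.image f)
          (fun x _ => Finset.mem_image_of_mem f (Finset.mem_univ x))]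
      exact Finset.sum_congr rfl (fun c hc => hcols c hc)
    have hinj : Set.InjOn Prod.fst (A : Set (G × G)) := by
      rw [← Finset.card_image_iff, hrange, hcardA]
    have e : ∀ c : G, (preim f c : Type _) ≃ (A.filter (fun p => p.2 = c)) :=
      fun c => Finset.equivOfCardEq (hcard c)
    have hxmem : ∀ x : G, x ∈ preim f (f x) := by
      intro x; rw [preim, Finset.mem_filter]; exact ⟨Finset.mem_univ x, rfl⟩
    set σ : G → G := fun x => ((e (f x)) ⟨x, hxmem x⟩ : G × G).1 with hσ
    have hmemA : ∀ x : G, (σ x, f x) ∈ A := by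
      intro x
      have hm := ((e (f x)) ⟨x, hxmem x⟩).2
      rw [Finset.mem_filter] at hm
      have heq : (σ x, f x) = ((e (f x)) ⟨x, hxmem x⟩ : G × G) :=
        Prod.ext rfl hm.2.symm
      rw [heq]; exact hm.1
    have hσinj : Function.Injective σ := by
      intro x y hxy
      have hfeq : f x = f y := by
        have h1 := hmemA x
        have h2 := hmemA y
        rw [← hxy] at h2
        have := hinj (Finset.mem_coe.mpr h1) (Finset.mem_coe.mpr h2) rfl
        exact (Prod.ext_iff.mp this).2
      have hy' : y ∈ preim f (f x) := by rw [hfeq]; exact hxmem y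
      have key : ∀ (c : G) (hc : f y = c) (hyc : y ∈ preim f c),
          σ y = ((e c) ⟨y, hyc⟩ : G × G).1 := by
        intro c hc hyc
        subst hc
        rfl
      have hy2 := key (f x) hfeq.symm hy'
      have ha := ((e (f x)) ⟨x, hxmem x⟩).2
      have hb := ((e (f x)) ⟨y, hy'⟩).2
      rw [Finset.mem_filter] at ha hb
      have habs : ((e (f x)) ⟨x, hxmem x⟩ : G × G) = ((e (f x)) ⟨y, hy'⟩ : G × G) := by
        apply Prod.ext
        · exact hxy.trans hy2
        · rw [ha.2, hb.2]
      have := (e (f x)).injective (Subtype.coe_injective habs)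
      exact congrArg Subtype.val this
    have hσbij : Function.Bijective σ := Finite.injective_iff_bijective.mp hσinj
    have hgmem : imCard (fun x => σ x - f x) ∈
        {n | ∃ g : G → G, Function.Bijective (fun x => g x + f x) ∧ imCard g = n} := by
      refine ⟨fun x => σ x - f x, ?_, rfl⟩
      have h1 : (fun x => (σ x - f x) + f x) = σ := by funext x; simp
      rw [h1]; exact hσbij
    have hle1 : pres f ≤ imCard (fun x => σ x - f x) := Nat.sInf_le hgmem
    have hle2 : imCard (fun x => σ x - f x) ≤ S.card := by
      rw [imCard]
      apply Finset.card_le_card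
      intro b hb
      rw [Finset.mem_image] at hb
      obtain ⟨x, _, hx⟩ := hb
      rw [hS, Finset.mem_image]
      exact ⟨(σ x, f x), hmemA x, by simp [← hx]⟩
    exact le_trans hle1 (le_trans hle2 hSk)
end

section
/- Let G be a finite group, f : G → G, and let A be an admissible subtable of M_f with value set S. Then #S ≥ u(f). -/
/-- The value set of any admissible subtable of `M_f` has at least `u(f)` elements. -/
theorem unif_le_card_of_isAdmissible {G : Type*} [AddGroup G] [Fintype G]
    [DecidableEq G] (f : G → G) (A : Finset (G × G)) (S : Finset G)
    (hA : IsAdmissible f A S) :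
    unif f ≤ S.card := by
  obtain ⟨hsub, hS, hcol⟩ := hA
  rcases Nat.eq_zero_or_pos (unif f) with h0 | hpos
  · omega
  -- pick b achieving the max
  obtain ⟨b, -, hb⟩ := Finset.exists_mem_eq_sup (Finset.univ : Finset G)
    Finset.univ_nonempty (fun b => (preim f b).card)
  have hub : unif f = (preim f b).card := hb
  have hbim : b ∈ Finset.univ.image f := by
    have : (preim f b).Nonempty := Finset.card_pos.mp (by omega)
    obtain ⟨x, hx⟩ := this
    simp only [preim, Finset.mem_filter] at hx
    exact Finset.mem_image.mpr ⟨x, Finset.mem_univ x, hx.2⟩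
  have hcard : (A.filter (fun p => p.2 = b)).card = unif f := by
    rw [hcol b hbim, hub]
  rw [← hcard]
  apply Finset.card_le_card_of_injOn (fun p => p.1 - p.2)
  · intro p hp
    rw [hS]
    exact Finset.mem_image_of_mem _ (Finset.mem_filter.mp hp).1
  · intro p hp q hq hpq
    have hp2 := (Finset.mem_filter.mp hp).2
    have hq2 := (Finset.mem_filter.mp hq).2
    simp only at hpq
    rw [hp2, hq2] at hpq
    exact Prod.ext (by simpa using hpq) (hp2.trans hq2.symm)
end

section
/- Let G be a finite group of order q, f : G → G with V(f) = v, and let k be an integer with 1 ≤ k ≤ q. If q · Σ_{i=0}^{k} (−1)^i · C(k,i) · C(v,i) / C(q,i) < 1, where the sum is computed in the rationals and C(n,m) denotes the binomial coefficient, then there exists a subset S ⊆ G with #S = k such that for every r ∈ G there exists c ∈ Im(f) with r − c ∈ S (i.e. S is a cover of G associated with f). -/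
open Finset

lemma key_id : ∀ (v : ℕ), ∀ (q k : ℕ), v ≤ q → k ≤ q →
    ∑ i ∈ range (k+1), (-1:ℚ)^i * (v.choose i : ℚ) * ((q-i).choose (k-i) : ℚ)
      = ((q-v).choose k : ℚ) := by
  intro v
  induction v with
  | zero =>
    intro q k hv hk
    rw [Finset.sum_eq_single 0]
    · simp
    · intro i hi hi0
      rw [Nat.choose_eq_zero_of_lt (Nat.pos_of_ne_zero hi0)]
      simp
    · simp
  | succ v ih =>
    intro q k hv hk
    rcases Nat.eq_zero_or_pos k with hk0 | hk0
    · subst hk0; simp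
    obtain ⟨m, rfl⟩ := Nat.exists_eq_succ_of_ne_zero hk0.ne'
    rw [Finset.sum_range_succ']
    have split : ∀ i ∈ range (m+1),
        (-1:ℚ)^(i+1) * ((v+1).choose (i+1) : ℚ) * ((q-(i+1)).choose (m+1-(i+1)) : ℚ)
        = (-1:ℚ)^(i+1) * (v.choose (i+1) : ℚ) * ((q-(i+1)).choose (m+1-(i+1)) : ℚ)
          + -((-1:ℚ)^i * (v.choose i : ℚ) * (((q-1)-i).choose (m-i) : ℚ)) := by
      intro i _
      have h1 : q - (i+1) = (q-1) - i := by omega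
      have h2 : m + 1 - (i+1) = m - i := by omega
      rw [Nat.choose_succ_succ, h1, h2]
      push_cast
      ring
    rw [Finset.sum_congr rfl split, Finset.sum_add_distrib, Finset.sum_neg_distrib]
    have e1 : (∑ i ∈ range (m+1),
        (-1:ℚ)^(i+1) * (v.choose (i+1) : ℚ) * ((q-(i+1)).choose (m+1-(i+1)) : ℚ))
        + (-1:ℚ)^0 * ((v+1).choose 0 : ℚ) * ((q-0).choose (m+1-0) : ℚ)
        = ((q-v).choose (m+1) : ℚ) := by
      have h := ih q (m+1) (by omega) hk
      rw [Finset.sum_range_succ'] at h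
      simpa using h
    have e2 : (∑ i ∈ range (m+1), (-1:ℚ)^i * (v.choose i : ℚ) * (((q-1)-i).choose (m-i) : ℚ))
        = (((q-1)-v).choose m : ℚ) := ih (q-1) m (by omega) (by omega)
    have goal2 : ((q-v).choose (m+1) : ℚ) - (((q-1)-v).choose m : ℚ)
        = ((q-(v+1)).choose (m+1) : ℚ) := by
      have h3 : q - v = (q - (v+1)) + 1 := by omega
      have h4 : (q-1) - v = q - (v+1) := by omega
      rw [h3, h4, Nat.choose_succ_succ]
      push_cast
      ring
    linarith [e1, e2, goal2]

/-- If `q·Σ_{i=0}^{k} (−1)^i C(k,i)C(v,i)/C(q,i) < 1` (computed in `ℚ`), where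
`q = #G` and `v = V(f)`, then there is a `k`-subset `S` of `G` which is a cover of `G`
associated with `f`, i.e. every `r ∈ G` satisfies `r - c ∈ S` for some `c ∈ Im(f)`. -/
theorem exists_cover_of_expectation {G : Type*} [AddGroup G] [Fintype G] [DecidableEq G]
    (f : G → G) (k : ℕ) (hk1 : 1 ≤ k) (hkq : k ≤ Fintype.card G)
    (h : (Fintype.card G : ℚ) *
        ∑ i ∈ Finset.range (k + 1),
          (-1 : ℚ) ^ i * (k.choose i) * ((imCard f).choose i) /
            ((Fintype.card G).choose i) < 1) :
    ∃ S : Finset G, S.card = k ∧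
      ∀ r : G, ∃ c ∈ Finset.univ.image f, r - c ∈ S := by
  classical
  set q := Fintype.card G with hq
  set v := imCard f with hvdef
  have hvq : v ≤ q := by
    rw [hvdef, imCard, hq]
    exact le_trans (Finset.card_image_le) (by simp [Finset.card_univ])
  have hCpos : (0:ℚ) < (q.choose k : ℚ) := by
    exact_mod_cast Nat.choose_pos hkq
  -- rewrite the sum
  have hmul : (q.choose k : ℚ) * ∑ i ∈ Finset.range (k + 1),
      (-1 : ℚ) ^ i * (k.choose i) * (v.choose i) / (q.choose i)
      = ((q-v).choose k : ℚ) := by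
    rw [Finset.mul_sum, ← key_id v q k hvq hkq]
    refine Finset.sum_congr rfl ?_
    intro i hi
    have hik : i ≤ k := by simpa using Nat.lt_succ_iff.mp (Finset.mem_range.mp hi)
    have hqi : ((q.choose i : ℕ):ℚ) ≠ 0 := by
      exact_mod_cast (Nat.choose_pos (le_trans hik hkq)).ne'
    have hcm : ((q.choose k : ℚ)) * ((k.choose i : ℚ))
        = ((q.choose i : ℚ)) * (((q-i).choose (k-i) : ℚ)) := by
      exact_mod_cast Nat.choose_mul (n := q) hik
    field_simp
    linear_combination (v.choose i : ℚ) * hcm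
  have hSum : (∑ i ∈ Finset.range (k + 1),
      (-1 : ℚ) ^ i * (k.choose i) * (v.choose i) / (q.choose i))
      = ((q-v).choose k : ℚ) / (q.choose k : ℚ) := by
    rw [eq_div_iff hCpos.ne']
    linear_combination hmul
  have hlt : (q : ℚ) * (((q-v).choose k : ℕ):ℚ) < ((q.choose k : ℕ):ℚ) := by
    have h2 := h
    rw [hSum, ← mul_div_assoc, div_lt_one hCpos] at h2
    exact_mod_cast h2
  have hnat : q * (q-v).choose k < q.choose k := by exact_mod_cast hlt
  -- combinatorial part
  set D : G → Finset G := fun r => (Finset.univ.image f).image (fun c => r - c) with hD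
  have hDcard : ∀ r, (D r).card = v := by
    intro r
    exact Finset.card_image_of_injective _ (sub_right_injective)
  set Bad : Finset (Finset G) :=
    Finset.univ.biUnion (fun r => (Finset.univ \ D r).powersetCard k) with hBad
  have hBadcard : Bad.card < ((Finset.univ : Finset G).powersetCard k).card := by
    calc Bad.card ≤ ∑ r : G, ((Finset.univ \ D r).powersetCard k).card :=
          Finset.card_biUnion_le
      _ = q * (q-v).choose k := by
          rw [Finset.sum_congr rfl (fun r _ => ?_), Finset.sum_const, Finset.card_univ, smul_eq_mul]
          rw [Finset.card_powersetCard, Finset.card_sdiff_of_subset (Finset.subset_univ _),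
            Finset.card_univ, hDcard]
      _ < q.choose k := hnat
      _ = ((Finset.univ : Finset G).powersetCard k).card := by
          rw [Finset.card_powersetCard, Finset.card_univ]
  obtain ⟨S, hS1, hS2⟩ := Finset.not_subset.mp fun hsub =>
    absurd (Finset.card_le_card hsub) (not_le.mpr hBadcard)
  obtain ⟨-, hScard⟩ := Finset.mem_powersetCard.mp hS1
  refine ⟨S, hScard, fun r => ?_⟩
  have : S ∉ (Finset.univ \ D r).powersetCard k := fun hm =>
    hS2 (Finset.mem_biUnion.mpr ⟨r, Finset.mem_univ r, hm⟩)
  rw [Finset.mem_powersetCard] at this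
  have hns : ¬ S ⊆ Finset.univ \ D r := fun hsub => (this ⟨hsub, hScard⟩)
  obtain ⟨x, hxS, hxD⟩ := Finset.not_subset.mp hns
  simp only [Finset.mem_sdiff, Finset.mem_univ, true_and, not_not] at hxD
  obtain ⟨c, hc, hcx⟩ := Finset.mem_image.mp hxD
  exact ⟨c, hc, hcx ▸ hxS⟩
end

section
/- Let G be a finite group of order q, f : G → G with V(f) = v, and let k be an integer with 1 ≤ k ≤ q. Then, as an identity of rational numbers, Σ_{S} #{r ∈ G : there exist c ∈ Im(f) and s ∈ S with r − c = s} = C(q,k) · q · Σ_{i=1}^{k} (−1)^{i−1} · C(k,i) · C(v,i) / C(q,i), where the outer sum on the left ranges over all k-element subsets S of G and C(n,m) denotes the binomial coefficient. -/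
open Finset

lemma alt_choose_sum : ∀ (v q k : ℕ), v ≤ q →
    (((q - v).choose k : ℚ))
      = ∑ i ∈ Finset.range (k+1), (-1:ℚ)^i * v.choose i * ((q-i).choose (k-i)) := by
  intro v
  induction v with
  | zero =>
    intro q k _
    rw [Finset.sum_eq_single 0]
    · simp
    · intro i _ hi
      rw [Nat.choose_eq_zero_of_lt (Nat.pos_of_ne_zero hi)]
      simp
    · simp
  | succ v ih =>
    intro q k hv
    match k with
    | 0 => simp
    | (m+1) =>
      rw [Finset.sum_range_succ']
      have key : ∀ i, ((-1:ℚ)^(i+1) * ((v+1).choose (i+1)) * ((q-(i+1)).choose (m+1-(i+1))))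
          = -((-1:ℚ)^i * (v.choose i) * (((q-1)-i).choose (m-i)))
            + (-1:ℚ)^(i+1) * (v.choose (i+1)) * ((q-(i+1)).choose (m+1-(i+1))) := by
        intro i
        have h1 : (q - (i+1)) = (q-1) - i := by omega
        have h2 : (m+1-(i+1)) = m - i := by omega
        rw [Nat.choose_succ_succ, h1, h2]
        push_cast
        ring
      rw [Finset.sum_congr rfl (fun i _ => key i), Finset.sum_add_distrib,
        Finset.sum_neg_distrib]
      have e1 := ih (q-1) m (by omega)
      have e2 := ih q (m+1) (by omega)
      rw [Finset.sum_range_succ'] at e2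
      have hpascal : ((q - v).choose (m+1) : ℚ)
          = ((q - (v+1)).choose m : ℚ) + ((q - (v+1)).choose (m+1) : ℚ) := by
        have h3 : q - v = (q - (v+1)) + 1 := by omega
        rw [h3, Nat.choose_succ_succ]
        push_cast; ring
      have h4 : (q - 1 - v) = q - (v+1) := by omega
      rw [h4] at e1
      rw [← e1]
      simp only [pow_zero, Nat.choose_zero_right, Nat.cast_one, one_mul, Nat.sub_zero,
        Nat.sub_self] at e2 ⊢
      linarith [e2, hpascal]

lemma count_meets {α : Type*} [Fintype α] [DecidableEq α] (A : Finset α) (k : ℕ)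
    (p : Finset α → Prop) [DecidablePred p] (hp : ∀ S, p S ↔ ∃ s ∈ S, s ∈ A) :
    ((Finset.powersetCard k (Finset.univ : Finset α)).filter p).card
      = (Fintype.card α).choose k - (Fintype.card α - A.card).choose k := by
  have hneg : (Finset.powersetCard k (Finset.univ : Finset α)).filter (fun S => ¬ p S)
      = Finset.powersetCard k Aᶜ := by
    ext S
    simp [Finset.mem_powersetCard, Finset.subset_iff, hp]
    tauto
  have htot := Finset.card_filter_add_card_filter_not
    (s := Finset.powersetCard k (Finset.univ : Finset α)) (p := p)
  rw [hneg, Finset.card_powersetCard, Finset.card_powersetCard, Finset.card_compl,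
    Finset.card_univ] at htot
  omega


/-- Summing, over all `k`-subsets `S` of `G`, the number of rows `r` of the subtraction
table of `f` meeting `S`, gives `C(q,k) · q · Σ_{i=1}^{k} (−1)^{i−1} C(k,i)C(v,i)/C(q,i)`
as rational numbers, where `q = #G` and `v = V(f)`. -/
theorem sum_card_rows_meeting {G : Type*} [AddGroup G] [Fintype G] [DecidableEq G]
    (f : G → G) (k : ℕ) (hk1 : 1 ≤ k) (hkq : k ≤ Fintype.card G) :
    (∑ S ∈ Finset.powersetCard k (Finset.univ : Finset G),
        ((Finset.univ.filter
          (fun r : G => ∃ c ∈ Finset.univ.image f, ∃ s ∈ S, r - c = s)).card : ℚ)) =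
      ((Fintype.card G).choose k : ℚ) * (Fintype.card G) *
        ∑ i ∈ Finset.Icc 1 k,
          (-1 : ℚ) ^ (i - 1) * (k.choose i) * ((imCard f).choose i) /
            ((Fintype.card G).choose i) := by
  set q := Fintype.card G with hq
  set v := imCard f with hvdef
  have hv : v ≤ q := by
    rw [hvdef, hq, imCard, ← Finset.card_univ]
    exact Finset.card_image_le
  -- per-row count
  have hrow : ∀ r : G,
      (((Finset.powersetCard k (Finset.univ : Finset G)).filter
        (fun S => ∃ c ∈ Finset.univ.image f, ∃ s ∈ S, r - c = s)).card : ℚ)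
      = (q.choose k : ℚ) - ((q - v).choose k : ℚ) := by
    intro r
    have hinj : Function.Injective (fun c : G => r - c) := fun a b h => by
      simpa using sub_right_injective h
    have hcard : ((Finset.univ.image f).image (fun c : G => r - c)).card = v := by
      rw [Finset.card_image_of_injective _ hinj]; rfl
    have := count_meets ((Finset.univ.image f).image (fun c : G => r - c)) k
      (fun S => ∃ c ∈ Finset.univ.image f, ∃ s ∈ S, r - c = s)
      (by
        intro S
        constructor
        · rintro ⟨c, hc, s, hs, hrc⟩
          exact ⟨s, hs, Finset.mem_image.2 ⟨c, hc, hrc⟩⟩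
        · rintro ⟨s, hs, hmem⟩
          obtain ⟨c, hc, hrc⟩ := Finset.mem_image.1 hmem
          exact ⟨c, hc, s, hs, hrc⟩)
    rw [hcard] at this
    rw [this, hq]
    have hle : (q - v).choose k ≤ q.choose k := Nat.choose_le_choose k (Nat.sub_le q v)
    have hle' : (Fintype.card G - v).choose k ≤ (Fintype.card G).choose k := hle
    push_cast [Nat.cast_sub hle']
    ring
  -- swap sums
  have hswap : (∑ S ∈ Finset.powersetCard k (Finset.univ : Finset G),
        ((Finset.univ.filter
          (fun r : G => ∃ c ∈ Finset.univ.image f, ∃ s ∈ S, r - c = s)).card : ℚ))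
      = (q : ℚ) * ((q.choose k : ℚ) - ((q - v).choose k : ℚ)) := by
    simp only [Finset.card_filter]
    push_cast
    rw [Finset.sum_comm]
    trans (∑ _r : G, ((q.choose k : ℚ) - ((q - v).choose k : ℚ)))
    · refine Finset.sum_congr rfl fun r _ => ?_
      rw [← hrow r, Finset.card_filter]
      push_cast
      refine Finset.sum_congr rfl fun x _ => ?_
      congr 1
    · rw [Finset.sum_const, Finset.card_univ, nsmul_eq_mul]
  rw [hswap]
  -- simplify RHS termwise
  have hterm : ∀ i ∈ Finset.Icc 1 k,
      (q.choose k : ℚ) * ((-1:ℚ)^(i-1) * (k.choose i) * (v.choose i) / (q.choose i))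
      = (-1:ℚ)^(i-1) * (v.choose i) * ((q - i).choose (k - i)) := by
    intro i hi
    rw [Finset.mem_Icc] at hi
    have hiq : i ≤ q := le_trans hi.2 hkq
    have hch : (q.choose k : ℚ) * (k.choose i) = (q.choose i : ℚ) * ((q - i).choose (k - i)) := by
      exact_mod_cast Nat.choose_mul (n := q) hi.2
    have hpos : (0:ℚ) < (q.choose i : ℚ) := by exact_mod_cast Nat.choose_pos hiq
    field_simp
    linear_combination ((v.choose i : ℚ)) * hch
  have hRHS : ((q.choose k : ℚ)) * (q : ℚ) *
        ∑ i ∈ Finset.Icc 1 k,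
          (-1 : ℚ) ^ (i - 1) * (k.choose i) * ((v).choose i) / ((q).choose i)
      = (q : ℚ) * ∑ i ∈ Finset.Icc 1 k,
          (-1:ℚ)^(i-1) * (v.choose i) * ((q - i).choose (k - i)) := by
    rw [mul_comm ((q.choose k : ℚ)) (q : ℚ), mul_assoc, Finset.mul_sum]
    congr 1
    exact Finset.sum_congr rfl hterm
  rw [hRHS]
  congr 1
  -- key identity from alt_choose_sum
  have halt := alt_choose_sum v q k hv
  have hins : Finset.range (k+1) = insert 0 (Finset.Icc 1 k) := by
    ext x; simp [Finset.mem_range, Finset.mem_Icc]; omega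
  rw [hins, Finset.sum_insert (by simp)] at halt
  simp only [pow_zero, Nat.choose_zero_right, Nat.cast_one, one_mul, Nat.sub_zero] at halt
  have hsign : ∀ i ∈ Finset.Icc 1 k,
      (-1:ℚ)^(i-1) * (v.choose i) * ((q - i).choose (k - i))
      = -((-1:ℚ)^i * (v.choose i) * ((q - i).choose (k - i))) := by
    intro i hi
    rw [Finset.mem_Icc] at hi
    obtain ⟨j, rfl⟩ := Nat.exists_eq_add_of_le hi.1
    have : 1 + j - 1 = j := by omega
    rw [this, pow_add]
    ring
  rw [Finset.sum_congr rfl hsign, Finset.sum_neg_distrib]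
  linarith [halt]
end

section
/- Let q ≥ 2 be an even integer and define the integer sequence (n_k) by n_0 = q/2 and n_k = n_{k−1} − ⌈n_{k−1}²/q⌉ for k ≥ 1 (so n_k remains a nonnegative integer; once n_k = 0 the sequence stays 0). Then for every integer k ≥ 1, (k + 2) · n_k < q, i.e. n_k < q/(k+2). -/
lemma step_lemma (q m a : ℕ) (hq : 0 < q) (ha : 1 ≤ a) (h : a * m ≤ q) :
    (a + 1) * (m - ⌈((m : ℚ) ^ 2) / (q : ℚ)⌉₊) < q := by
  rcases Nat.eq_zero_or_pos m with hm | hm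
  · simpa [hm] using hq
  set c := ⌈((m : ℚ) ^ 2) / (q : ℚ)⌉₊ with hcdef
  have hq0 : (0 : ℚ) < q := by exact_mod_cast hq
  have hmq : m ≤ q := le_trans (Nat.le_mul_of_pos_left m ha) h
  have hc : ((m : ℚ) ^ 2) / q ≤ (c : ℚ) := Nat.le_ceil _
  have hcm : c ≤ m := by
    apply Nat.ceil_le.mpr
    rw [div_le_iff₀ hq0]
    have : (m : ℚ) ≤ q := by exact_mod_cast hmq
    nlinarith [(Nat.one_le_cast (α := ℚ)).mpr hm]
  have hcast : ((m - c : ℕ) : ℚ) = (m : ℚ) - c := by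
    push_cast [Nat.cast_sub hcm]; ring
  rw [← Nat.cast_lt (α := ℚ)]
  push_cast [Nat.cast_sub hcm]
  have hh : (a : ℚ) * m ≤ q := by exact_mod_cast h
  have ha' : (1 : ℚ) ≤ a := by exact_mod_cast ha
  have hm' : (1 : ℚ) ≤ m := by exact_mod_cast hm
  have hcq : (m : ℚ) ^ 2 ≤ c * q := by
    rw [div_le_iff₀ hq0] at hc; linarith
  nlinarith [mul_nonneg (sub_nonneg.mpr hh) (sub_nonneg.mpr (show (m : ℚ) ≤ q by exact_mod_cast hmq)), mul_pos hq0 hq0, sq_nonneg ((m : ℚ) - 1)]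

/-- For even `q ≥ 2` and the sequence `n₀ = q/2`, `n_k = n_{k−1} − ⌈n_{k−1}²/q⌉`
(truncated natural subtraction), one has `n_k < q/(k+2)` for all `k ≥ 1`. -/
theorem seq_lt_of_even (q : ℕ) (hq : 2 ≤ q) (he : Even q)
    (n : ℕ → ℕ) (h0 : n 0 = q / 2)
    (hrec : ∀ k : ℕ, n (k + 1) = n k - ⌈((n k : ℚ) ^ 2) / (q : ℚ)⌉₊) :
    ∀ k : ℕ, 1 ≤ k → (k + 2) * n k < q := by
  have hq0 : 0 < q := by omega
  have inv : ∀ k : ℕ, (k + 2) * n k ≤ q := by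
    intro k
    induction k with
    | zero =>
      rw [h0]
      omega
    | succ j ih =>
      have := step_lemma q (n j) (j + 2) hq0 (by omega) ih
      rw [← hrec j] at this
      calc (j + 1 + 2) * n (j + 1) = (j + 2 + 1) * n (j + 1) := by ring
        _ ≤ q := le_of_lt this
  intro k hk
  obtain ⟨j, rfl⟩ := Nat.exists_eq_add_of_le hk
  have := step_lemma q (n j) (j + 2) hq0 (by omega) (inv j)
  rw [← hrec j] at this
  calc (1 + j + 2) * n (1 + j) = (j + 2 + 1) * n (j + 1) := by ring_nf
    _ < q := this
end

section
/- Let q ≥ 3 be an odd integer, set m = q − 1, and define the integer sequence (n_k) by n_0 = m/2 and n_k = n_{k−1} − ⌈n_{k−1}²/m⌉ for k ≥ 1 (so n_k remains a nonnegative integer; once n_k = 0 the sequence stays 0). Then for every integer k ≥ 1, (k + 2) · n_k < m, i.e. n_k < (q−1)/(k+2). -/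
lemma seq_key (m k x : ℕ) (hm : 0 < m) (hx : (k + 2) * x ≤ m) :
    (k + 3) * (x - ⌈(x : ℚ) ^ 2 / (m : ℚ)⌉₊) < m := by
  rcases Nat.eq_zero_or_pos x with hx0 | hx0
  · simpa [hx0] using hm
  set c := ⌈(x : ℚ) ^ 2 / (m : ℚ)⌉₊ with hc
  rcases le_or_gt c x with h | h
  · have hmpos : (0 : ℚ) < m := by exact_mod_cast hm
    have hcle : (x : ℚ) ^ 2 / m ≤ c := Nat.le_ceil _
    have hcle' : (x : ℚ) ^ 2 ≤ (c : ℚ) * m := by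
      rw [div_le_iff₀ hmpos] at hcle; exact hcle
    have hxm : ((k : ℚ) + 2) * x ≤ m := by exact_mod_cast hx
    have hxpos : (0 : ℚ) < x := by exact_mod_cast hx0
    have hxlem : (x : ℚ) ≤ m := by nlinarith
    have hQ : ((k : ℚ) + 3) * ((x : ℚ) - c) < m := by
      nlinarith [mul_nonneg (sub_nonneg.2 hxm) (sub_nonneg.2 hxlem)]
    have hcast : (((k + 3) * (x - c) : ℕ) : ℚ) = ((k : ℚ) + 3) * ((x : ℚ) - c) := by
      push_cast [h]; ring
    have : (((k + 3) * (x - c) : ℕ) : ℚ) < (m : ℚ) := hcast ▸ hQ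
    exact_mod_cast this
  · rw [Nat.sub_eq_zero_of_le h.le]
    simpa using hm

/-- For odd `q ≥ 3`, `m = q − 1`, and the sequence `n₀ = m/2`,
`n_k = n_{k−1} − ⌈n_{k−1}²/m⌉` (truncated natural subtraction), one has
`n_k < m/(k+2)` for all `k ≥ 1`. -/
theorem seq_lt_of_odd (q : ℕ) (hq : 3 ≤ q) (ho : Odd q)
    (n : ℕ → ℕ) (h0 : n 0 = (q - 1) / 2)
    (hrec : ∀ k : ℕ, n (k + 1) = n k - ⌈((n k : ℚ) ^ 2) / ((q - 1 : ℕ) : ℚ)⌉₊) :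
    ∀ k : ℕ, 1 ≤ k → (k + 2) * n k < q - 1 := by
  have hm : 0 < q - 1 := by omega
  intro k hk
  induction k with
  | zero => omega
  | succ k ih =>
    rcases Nat.eq_zero_or_pos k with rfl | hk1
    · have hx : (0 + 2) * n 0 ≤ q - 1 := by rw [h0]; omega
      have := seq_key (q - 1) 0 (n 0) hm hx
      rw [hrec 0]
      simpa using this
    · have ih' := ih hk1
      have := seq_key (q - 1) k (n k) hm (le_of_lt ih')
      rw [hrec k]
      calc (k + 1 + 2) * (n k - ⌈((n k : ℚ) ^ 2) / ((q - 1 : ℕ) : ℚ)⌉₊)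
          = (k + 3) * (n k - ⌈((n k : ℚ) ^ 2) / ((q - 1 : ℕ) : ℚ)⌉₊) := by ring
        _ < q - 1 := this
end

section
/- Let G be a finite group of even order q and let f : G → G be two-to-one. Define the integer sequence (n_k) by n_0 = q/2 and n_k = n_{k−1} − ⌈n_{k−1}²/q⌉ for k ≥ 1. Then for every integer k ≥ 1, pres(f) ≤ 1 + k + n_k. -/
/-- One greedy step: `m ↦ m - ⌈m²/q⌉`. -/
def stepFn (q m : ℕ) : ℕ := m - ⌈((m : ℚ) ^ 2) / (q : ℚ)⌉₊

lemma exists_good_c {G : Type*} [AddGroup G] [Fintype G] [DecidableEq G]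
    (B T : Finset G) (hBT : B.card = T.card) :
    ∃ c : G, ⌈((B.card : ℚ) ^ 2) / (Fintype.card G : ℚ)⌉₊ ≤
      (B.filter (fun b => c + b ∈ T)).card := by
  set q := Fintype.card G with hqdef
  set r := ⌈((B.card : ℚ) ^ 2) / (q : ℚ)⌉₊ with hrdef
  by_contra hcon
  push_neg at hcon
  have hq : 0 < q := Fintype.card_pos
  have hfiber : ∀ b : G, (Finset.univ.filter (fun c => c + b ∈ T)).card = T.card := by
    intro b
    have : Finset.univ.filter (fun c => c + b ∈ T) = T.image (fun t => t - b) := by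
      ext c
      simp only [Finset.mem_filter, Finset.mem_univ, true_and, Finset.mem_image]
      constructor
      · intro h; exact ⟨c + b, h, by simp⟩
      · rintro ⟨t, ht, rfl⟩; simpa using ht
    rw [this, Finset.card_image_of_injective _ (fun a b h => by simpa using h)]
  have hsum : ∑ c : G, (B.filter (fun b => c + b ∈ T)).card = B.card * B.card := by
    calc ∑ c : G, (B.filter (fun b => c + b ∈ T)).card
        = ∑ c : G, ∑ b ∈ B, if c + b ∈ T then 1 else 0 := by
          simp only [Finset.card_filter]
      _ = ∑ b ∈ B, ∑ c : G, if c + b ∈ T then 1 else 0 := Finset.sum_comm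
      _ = ∑ b ∈ B, (Finset.univ.filter (fun c => c + b ∈ T)).card := by
          simp only [Finset.card_filter]
      _ = ∑ _b ∈ B, T.card := Finset.sum_congr rfl fun b _ => hfiber b
      _ = B.card * T.card := by simp [mul_comm]
      _ = B.card * B.card := by rw [hBT]
  rcases Nat.eq_zero_or_pos r with h0 | hpos
  · exact absurd (hcon 0) (by omega)
  have hle : B.card * B.card ≤ q * (r - 1) := by
    rw [← hsum]
    calc ∑ c : G, (B.filter (fun b => c + b ∈ T)).card
        ≤ ∑ _c : G, (r - 1) := Finset.sum_le_sum fun c _ => by have := hcon c; omega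
      _ = q * (r - 1) := by simp [hqdef, mul_comm]
  have h1 : (r : ℚ) < (B.card : ℚ) ^ 2 / (q : ℚ) + 1 := by
    rw [hrdef]; exact Nat.ceil_lt_add_one (by positivity)
  have h2 : (q : ℚ) * ((r : ℚ) - 1) < (B.card : ℚ) ^ 2 := by
    have hq' : (0 : ℚ) < (q : ℚ) := by exact_mod_cast hq
    have : (r : ℚ) - 1 < (B.card : ℚ) ^ 2 / (q : ℚ) := by linarith
    calc (q : ℚ) * ((r : ℚ) - 1) < (q : ℚ) * ((B.card : ℚ) ^ 2 / (q : ℚ)) :=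
          mul_lt_mul_of_pos_left this hq'
      _ = (B.card : ℚ) ^ 2 := by field_simp
  have hle' : ((B.card : ℚ)) ^ 2 ≤ (q : ℚ) * ((r : ℚ) - 1) := by
    have := (Nat.cast_le (α := ℚ)).mpr hle
    push_cast [Nat.cast_sub hpos] at this
    nlinarith [this]
  linarith

lemma exists_matching_s15 {G : Type*} [AddGroup G] [Fintype G] [DecidableEq G] :
    ∀ (k : ℕ) (B T : Finset G), B.card = T.card →
    ∃ (t : G → G) (D : Finset G), Set.InjOn t ↑B ∧ (∀ b ∈ B, t b ∈ T) ∧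
      (∀ b ∈ B, t b - b ∈ D) ∧ D.card ≤ k + (stepFn (Fintype.card G))^[k] B.card := by
  intro k
  induction k with
  | zero =>
    intro B T hBT
    have e := Finset.equivOfCardEq hBT
    refine ⟨fun b => if hb : b ∈ B then (e ⟨b, hb⟩ : G) else b,
      B.image (fun b => (if hb : b ∈ B then (e ⟨b, hb⟩ : G) else b) - b), ?_, ?_, ?_, ?_⟩
    · intro a ha b hb hab
      simp only [Finset.mem_coe] at ha hb
      simp only [dif_pos ha, dif_pos hb] at hab
      have := e.injective (Subtype.coe_injective hab)
      exact congrArg Subtype.val this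
    · intro b hb
      simp only [dif_pos hb]
      exact Finset.coe_mem _
    · intro b hb
      exact Finset.mem_image_of_mem _ hb
    · simpa using Finset.card_image_le
  | succ k ih =>
    intro B T hBT
    obtain ⟨c, hc⟩ := exists_good_c B T hBT
    set r := ⌈((B.card : ℚ) ^ 2) / (Fintype.card G : ℚ)⌉₊ with hrdef
    obtain ⟨B', hB'sub, hB'card⟩ := Finset.exists_subset_card_eq hc
    have hB'B : B' ⊆ B := hB'sub.trans (Finset.filter_subset _ _)
    have hinjc : Function.Injective (fun b : G => c + b) := fun a b h => by simpa using h
    have himcard : (B'.image (fun b => c + b)).card = r := by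
      rw [Finset.card_image_of_injective _ hinjc, hB'card]
    have himsub : B'.image (fun b => c + b) ⊆ T := by
      intro x hx
      obtain ⟨b, hb, rfl⟩ := Finset.mem_image.mp hx
      exact (Finset.mem_filter.mp (hB'sub hb)).2
    obtain ⟨t', D', hinj', hmem', hdiff', hcard'⟩ :=
      ih (B \ B') (T \ B'.image (fun b => c + b))
        (by rw [Finset.card_sdiff_of_subset hB'B, Finset.card_sdiff_of_subset himsub, himcard, hB'card, hBT])
    refine ⟨fun b => if b ∈ B' then c + b else t' b, insert c D', ?_, ?_, ?_, ?_⟩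
    · intro a ha b hb hab
      simp only [Finset.mem_coe] at ha hb
      by_cases ha' : a ∈ B' <;> by_cases hb' : b ∈ B' <;>
        simp only [ha', hb', if_true, if_false, if_pos, if_neg] at hab
      · exact hinjc hab
      · exfalso
        have h1 : t' b ∈ T \ B'.image (fun b => c + b) :=
          hmem' b (Finset.mem_sdiff.mpr ⟨hb, hb'⟩)
        have h2 : c + a ∈ B'.image (fun b => c + b) := Finset.mem_image_of_mem _ ha'
        rw [hab] at h2
        exact (Finset.mem_sdiff.mp h1).2 h2
      · exfalso
        have h1 : t' a ∈ T \ B'.image (fun b => c + b) :=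
          hmem' a (Finset.mem_sdiff.mpr ⟨ha, ha'⟩)
        have h2 : c + b ∈ B'.image (fun b => c + b) := Finset.mem_image_of_mem _ hb'
        rw [← hab] at h2
        exact (Finset.mem_sdiff.mp h1).2 h2
      · exact hinj' (by simp [ha, ha']) (by simp [hb, hb']) hab
    · intro b hb
      by_cases hb' : b ∈ B'
      · simp only [if_pos hb']
        exact himsub (Finset.mem_image_of_mem _ hb')
      · simp only [if_neg hb']
        exact (Finset.mem_sdiff.mp (hmem' b (Finset.mem_sdiff.mpr ⟨hb, hb'⟩))).1
    · intro b hb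
      by_cases hb' : b ∈ B'
      · simp only [if_pos hb']
        simp [add_sub_cancel_right]
      · simp only [if_neg hb']
        exact Finset.mem_insert_of_mem (hdiff' b (Finset.mem_sdiff.mpr ⟨hb, hb'⟩))
    · calc (insert c D').card ≤ D'.card + 1 := Finset.card_insert_le _ _
        _ ≤ (k + (stepFn (Fintype.card G))^[k] (B \ B').card) + 1 := by omega
        _ = (k + 1) + (stepFn (Fintype.card G))^[k + 1] B.card := by
            rw [Function.iterate_succ_apply, Finset.card_sdiff_of_subset hB'B, hB'card]
            have : stepFn (Fintype.card G) B.card = B.card - r := rfl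
            rw [this]
            omega

/-- If `#G = q` is even, `f : G → G` is two-to-one, and `n₀ = q/2`,
`n_k = n_{k−1} − ⌈n_{k−1}²/q⌉`, then `pres(f) ≤ 1 + k + n_k` for every `k ≥ 1`. -/
theorem pres_le_seq_of_even_two_to_one {G : Type*} [AddGroup G] [Fintype G]
    [DecidableEq G] (f : G → G) (he : Even (Fintype.card G))
    (h2 : ∀ b ∈ Finset.univ.image f, (preim f b).card = 2)
    (n : ℕ → ℕ) (h0 : n 0 = Fintype.card G / 2)
    (hrec : ∀ k : ℕ, n (k + 1) = n k - ⌈((n k : ℚ) ^ 2) / (Fintype.card G : ℚ)⌉₊) :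
    ∀ k : ℕ, 1 ≤ k → pres f ≤ 1 + k + n k := by
  intro k _
  set q := Fintype.card G with hqdef
  set I := Finset.univ.image f with hIdef
  -- n k equals iterate of stepFn
  have hn : ∀ j, n j = (stepFn q)^[j] (q / 2) := by
    intro j
    induction j with
    | zero => simpa using h0
    | succ j ihj =>
      rw [hrec j, ihj, Function.iterate_succ_apply']
      rfl
  -- cardinality of the image
  have hIcard : 2 * I.card = q := by
    have hfib := Finset.card_eq_sum_card_fiberwise
      (f := f) (s := Finset.univ) (t := I) (fun x _ => Finset.mem_image_of_mem f (Finset.mem_univ x))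
    have : ∑ b ∈ I, (Finset.univ.filter (fun x => f x = b)).card = ∑ _b ∈ I, 2 :=
      Finset.sum_congr rfl fun b hb => h2 b hb
    rw [this] at hfib
    simp only [Finset.sum_const, smul_eq_mul, Finset.card_univ] at hfib
    rw [hqdef]
    omega
  have hIc : I.card = q / 2 := by
    obtain ⟨m, hm⟩ := he
    omega
  have hcompl : I.card = Iᶜ.card := by
    rw [Finset.card_compl]
    omega
  obtain ⟨t, D, hinj, hmem, hdiff, hcard⟩ := exists_matching_s15 k I Iᶜ hcompl
  -- choice of a distinguished preimage
  have hpre : ∀ b ∈ I, ∃ x, f x = b := by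
    intro b hb
    obtain ⟨x, _, hx⟩ := Finset.mem_image.mp hb
    exact ⟨x, hx⟩
  classical
  set p : G → G := fun b => if h : ∃ x, f x = b then h.choose else b with hpdef
  have hp : ∀ b ∈ I, f (p b) = b := by
    intro b hb
    have hx : ∃ x, f x = b := hpre b hb
    simp only [hpdef, dif_pos hx]
    exact hx.choose_spec
  set g : G → G := fun x => if x = p (f x) then (0 : G) else t (f x) - f x with hgdef
  have hfI : ∀ x, f x ∈ I := fun x => Finset.mem_image_of_mem f (Finset.mem_univ x)
  have hsigma : ∀ x, g x + f x = if x = p (f x) then f x else t (f x) := by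
    intro x
    by_cases hx : x = p (f x)
    · simp only [hgdef, if_pos hx, zero_add]
    · simp only [hgdef, if_neg hx]
      exact sub_add_cancel _ _
  have hbij : Function.Bijective (fun x => g x + f x) := by
    rw [Fintype.bijective_iff_injective_and_card]
    refine ⟨?_, rfl⟩
    intro x y hxy
    have hxy' : g x + f x = g y + f y := hxy
    rw [hsigma, hsigma] at hxy'
    by_cases hx : x = p (f x) <;> by_cases hy : y = p (f y)
    · rw [if_pos hx, if_pos hy] at hxy'
      rw [hx, hy, hxy']
    · rw [if_pos hx, if_neg hy] at hxy'
      exfalso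
      have hm := hmem (f y) (hfI y)
      rw [← hxy'] at hm
      exact (Finset.mem_compl.mp hm) (hfI x)
    · rw [if_neg hx, if_pos hy] at hxy'
      exfalso
      have hm := hmem (f x) (hfI x)
      rw [hxy'] at hm
      exact (Finset.mem_compl.mp hm) (hfI y)
    · rw [if_neg hx, if_neg hy] at hxy'
      have hfxy : f x = f y := hinj (hfI x) (hfI y) hxy'
      have hy' : y ≠ p (f x) := by rw [hfxy]; exact hy
      have hc2 : (preim f (f x)).card = 2 := h2 _ (hfI x)
      obtain ⟨u, v, huv, hset⟩ := Finset.card_eq_two.mp hc2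
      have hxmem : x ∈ preim f (f x) := by simp [preim]
      have hymem : y ∈ preim f (f x) := by simp [preim, hfxy]
      have hpmem : p (f x) ∈ preim f (f x) := by simp [preim, hp _ (hfI x)]
      rw [hset] at hxmem hymem hpmem
      simp only [Finset.mem_insert, Finset.mem_singleton] at hxmem hymem hpmem
      rcases hpmem with h' | h' <;> subst h' <;> rcases hxmem with h1 | h1 <;>
        rcases hymem with h2 | h2 <;> first | exact h1.trans h2.symm | tauto
  have himsub : Finset.univ.image g ⊆ insert (0 : G) D := by
    intro z hz
    obtain ⟨x, _, rfl⟩ := Finset.mem_image.mp hz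
    by_cases hx : x = p (f x)
    · simp only [hgdef, if_pos hx]
      exact Finset.mem_insert_self _ _
    · simp only [hgdef, if_neg hx]
      exact Finset.mem_insert_of_mem (hdiff (f x) (hfI x))
  simp only [← hqdef] at hcard
  have hpres : pres f ≤ imCard g := Nat.sInf_le ⟨g, hbij, rfl⟩
  have : imCard g ≤ 1 + k + n k := by
    calc imCard g ≤ (insert (0:G) D).card := Finset.card_le_card himsub
      _ ≤ D.card + 1 := Finset.card_insert_le _ _
      _ ≤ (k + (stepFn q)^[k] I.card) + 1 := by omega
      _ = 1 + k + n k := by rw [hn k, hIc]; omega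
  omega
end

section
/- Let G be a finite group of odd order q and let f : G → G satisfy f(0) = 0, preim(f,0) = {0}, and #preim(f,b) = 2 for every nonzero b ∈ Im(f). Define the integer sequence (n_k) by n_0 = (q−1)/2 and n_k = n_{k−1} − ⌈n_{k−1}²/(q−1)⌉ for k ≥ 1. Then for every integer k ≥ 1, pres(f) ≤ 1 + k + n_k. -/
section Aux
open Finset

variable {G : Type*} [AddGroup G] [Fintype G] [DecidableEq G]

/-- one greedy step -/
def stp (q m : ℕ) : ℕ := m - ⌈((m : ℚ)) ^ 2 / ((q - 1 : ℕ) : ℚ)⌉₊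

lemma key : ∀ (k : ℕ) (B M : Finset G), Disjoint B M → B.card = M.card →
    ∃ φ : G → G, B.image φ = M ∧
      (B.image (fun b => φ b - b)).card ≤ k + (stp (Fintype.card G))^[k] B.card := by
  intro k
  induction k with
  | zero =>
    intro B M hdis hcard
    have e : {x // x ∈ B} ≃ {x // x ∈ M} := Finset.equivOfCardEq hcard
    refine ⟨fun x => if h : x ∈ B then (e ⟨x, h⟩ : G) else x, ?_, ?_⟩
    · apply Finset.Subset.antisymm
      · intro y hy
        obtain ⟨x, hx, rfl⟩ := Finset.mem_image.mp hy
        simp only [dif_pos hx]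
        exact (e ⟨x, hx⟩).2
      · intro y hy
        refine Finset.mem_image.mpr ⟨(e.symm ⟨y, hy⟩ : G), (e.symm ⟨y, hy⟩).2, ?_⟩
        rw [dif_pos (e.symm ⟨y, hy⟩).2]
        simp
    · simpa using Finset.card_image_le
  | succ k ih =>
    intro B M hdis hcard
    set q := Fintype.card G with hq
    set m := B.card with hm
    set d := ⌈((m : ℚ)) ^ 2 / ((q - 1 : ℕ) : ℚ)⌉₊ with hd
    by_cases hd0 : d = 0
    · obtain ⟨φ, h1, h2⟩ := ih B M hdis hcard
      refine ⟨φ, h1, ?_⟩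
      have : stp q m = m := by simp [stp, ← hd, hd0]
      rw [Function.iterate_succ_apply, this]
      rw [← hm] at h2
      omega
    -- d ≥ 1 case
    · have hd1 : 1 ≤ d := Nat.one_le_iff_ne_zero.mpr hd0
      -- denominator positive
      have hqpos : 0 < q - 1 := by
        by_contra h
        have : ((q - 1 : ℕ) : ℚ) = 0 := by
          have : q - 1 = 0 := by omega
          simp [this]
        rw [this, div_zero] at hd
        simp [hd] at hd0
      -- counting: the sum over c ≠ 0
      have hsum : ∑ c ∈ (univ.erase (0 : G)), (B.filter fun b => c + b ∈ M).card
          = m * m := by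
        have step1 : ∀ c : G, (B.filter fun b => c + b ∈ M).card
            = ∑ b ∈ B, if c + b ∈ M then 1 else 0 := fun c => by
          rw [Finset.card_filter]
        calc ∑ c ∈ univ.erase (0 : G), (B.filter fun b => c + b ∈ M).card
            = ∑ c ∈ univ.erase (0 : G), ∑ b ∈ B, if c + b ∈ M then 1 else 0 := by
              exact Finset.sum_congr rfl fun c _ => step1 c
          _ = ∑ b ∈ B, ∑ c ∈ univ.erase (0 : G), if c + b ∈ M then 1 else 0 :=
              Finset.sum_comm
          _ = ∑ b ∈ B, M.card := by
              refine Finset.sum_congr rfl fun b hb => ?_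
              rw [← Finset.card_filter]
              refine Finset.card_bij' (fun c _ => c + b) (fun y _ => y - b) ?_ ?_ ?_ ?_
              · intro c hc
                exact (Finset.mem_filter.mp hc).2
              · intro y hy
                refine Finset.mem_filter.mpr ⟨?_, ?_⟩
                · refine Finset.mem_erase.mpr ⟨?_, Finset.mem_univ _⟩
                  intro h
                  have : y = b := by
                    have := sub_eq_zero.mp h
                    exact this
                  exact (Finset.disjoint_left.mp hdis hb) (this ▸ hy)
                · simpa using hy
              · intro c hc; exact add_sub_cancel_right c b
              · intro y hy; exact sub_add_cancel y b
          _ = m * m := by rw [Finset.sum_const, smul_eq_mul, ← hm, hcard, Nat.mul_comm]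
      -- existence of a good c
      have hex : ∃ c ∈ univ.erase (0 : G), d ≤ (B.filter fun b => c + b ∈ M).card := by
        by_contra h
        push_neg at h
        have hle : ∑ c ∈ (univ.erase (0 : G)), (B.filter fun b => c + b ∈ M).card
            ≤ (univ.erase (0 : G)).card * (d - 1) := by
          apply Finset.sum_le_card_nsmul
          intro c hc
          have := h c hc
          omega
        have hcarderase : (univ.erase (0 : G)).card = q - 1 := by
          rw [Finset.card_erase_of_mem (Finset.mem_univ _), Finset.card_univ]
        rw [hsum, hcarderase] at hle
        -- contradiction with d = ⌈m²/(q-1)⌉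
        have hlt : ((d - 1 : ℕ) : ℚ) < ((m : ℚ)) ^ 2 / ((q - 1 : ℕ) : ℚ) := by
          apply Nat.lt_ceil.mp
          rw [← hd]; omega
        have hq1 : (0 : ℚ) < ((q - 1 : ℕ) : ℚ) := by exact_mod_cast hqpos
        rw [lt_div_iff₀ hq1] at hlt
        have : ((q - 1 : ℕ) : ℚ) * ((d - 1 : ℕ) : ℚ) < (m : ℚ) ^ 2 := by
          rw [mul_comm]; exact hlt
        have hcast : ((m * m : ℕ) : ℚ) ≤ ((q - 1) * (d - 1) : ℕ) := by exact_mod_cast hle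
        push_cast at hcast this
        nlinarith
      obtain ⟨c, _, hc⟩ := hex
      obtain ⟨S₀, hS₀sub, hS₀card⟩ := Finset.exists_subset_card_eq hc
      have hS₀B : S₀ ⊆ B := hS₀sub.trans (Finset.filter_subset _ _)
      set S₀' := S₀.image (fun b => c + b) with hS₀'
      have hinj : Set.InjOn (fun b => c + b) S₀ := fun a _ b _ h => by
        simpa using h
      have hS₀'card : S₀'.card = d := by
        rw [hS₀', Finset.card_image_of_injOn hinj, hS₀card]
      have hS₀'M : S₀' ⊆ M := by
        intro y hy
        obtain ⟨b, hb, rfl⟩ := Finset.mem_image.mp hy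
        exact (Finset.mem_filter.mp (hS₀sub hb)).2
      set B' := B \ S₀ with hB'
      set M' := M \ S₀' with hM'
      have hB'card : B'.card = m - d := by
        rw [hB', Finset.card_sdiff_of_subset hS₀B, hS₀card]
      have hM'card : M'.card = m - d := by
        rw [hM', Finset.card_sdiff_of_subset hS₀'M, hS₀'card, ← hcard]
      have hdis' : Disjoint B' M' :=
        Disjoint.mono (Finset.sdiff_subset) (Finset.sdiff_subset) hdis
      obtain ⟨φ', himg', hcard'⟩ := ih B' M' hdis' (by rw [hB'card, hM'card])
      refine ⟨fun x => if x ∈ S₀ then c + x else φ' x, ?_, ?_⟩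
      · have hBsplit : S₀ ∪ B' = B := by
          rw [hB']; exact Finset.union_sdiff_of_subset hS₀B
        rw [← hBsplit, Finset.image_union]
        have h1 : S₀.image (fun x => if x ∈ S₀ then c + x else φ' x) = S₀' := by
          rw [hS₀']
          apply Finset.image_congr
          intro x hx; simp [Finset.mem_coe.mp hx]
        have h2 : B'.image (fun x => if x ∈ S₀ then c + x else φ' x) = M' := by
          rw [← himg']
          apply Finset.image_congr
          intro x hx
          have : x ∉ S₀ := (Finset.mem_sdiff.mp (Finset.mem_coe.mp hx)).2
          simp [this]
        rw [h1, h2, hM']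
        exact Finset.union_sdiff_of_subset hS₀'M
      · show (B.image (fun b => (if b ∈ S₀ then c + b else φ' b) - b)).card ≤ _
        have hsub : B.image (fun b => (if b ∈ S₀ then c + b else φ' b) - b)
            ⊆ insert c (B'.image (fun b => φ' b - b)) := by
          intro y hy
          obtain ⟨x, hx, rfl⟩ := Finset.mem_image.mp hy
          by_cases hxS : x ∈ S₀
          · simp [hxS]
          · have hxB' : x ∈ B' := by
              rw [hB']; exact Finset.mem_sdiff.mpr ⟨hx, hxS⟩
            simp only [if_neg hxS]
            exact Finset.mem_insert_of_mem (Finset.mem_image_of_mem _ hxB')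
        have := Finset.card_le_card hsub
        have hci := Finset.card_insert_le c (B'.image (fun b => φ' b - b))
        have hstep : stp q m = m - d := by rw [stp, ← hd]
        rw [Function.iterate_succ_apply, hstep, ← hB'card]
        omega

end Aux

open Finset in
/-- If `#G = q` is odd, `f(0) = 0`, `preim(f,0) = {0}`, `f` is two-to-one on the nonzero
elements, and `n₀ = (q−1)/2`, `n_k = n_{k−1} − ⌈n_{k−1}²/(q−1)⌉`, then
`pres(f) ≤ 1 + k + n_k` for every `k ≥ 1`. -/
theorem pres_le_seq_of_odd_two_to_one {G : Type*} [AddGroup G] [Fintype G]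
    [DecidableEq G] (f : G → G) (ho : Odd (Fintype.card G))
    (hf0 : f 0 = 0) (hp0 : preim f 0 = {0})
    (h2 : ∀ b ∈ Finset.univ.image f, b ≠ 0 → (preim f b).card = 2)
    (n : ℕ → ℕ) (h0 : n 0 = (Fintype.card G - 1) / 2)
    (hrec : ∀ k : ℕ,
      n (k + 1) = n k - ⌈((n k : ℚ) ^ 2) / ((Fintype.card G - 1 : ℕ) : ℚ)⌉₊) :
    ∀ k : ℕ, 1 ≤ k → pres f ≤ 1 + k + n k := by
  intro k hk
  classical
  set q := Fintype.card G with hq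
  set B := (univ.image f).erase 0 with hB
  set M := (univ.image f)ᶜ with hM
  have h0mem : (0 : G) ∈ univ.image f := mem_image.mpr ⟨0, mem_univ 0, hf0⟩
  -- cardinality count : q = 1 + 2 * B.card
  have hcount : q = 1 + 2 * B.card := by
    have hsum := Finset.card_eq_sum_card_image f (univ : Finset G)
    rw [Finset.card_univ, ← hq] at hsum
    have hins : univ.image f = insert 0 B := by
      rw [hB, Finset.insert_erase h0mem]
    rw [hins, Finset.sum_insert (Finset.notMem_erase _ _)] at hsum
    have hz : (univ.filter fun x => f x = 0).card = 1 := by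
      have : (univ.filter fun x => f x = (0 : G)) = preim f 0 := rfl
      rw [this, hp0, Finset.card_singleton]
    have hrest : ∑ b ∈ B, (univ.filter fun x => f x = b).card = 2 * B.card := by
      rw [Finset.sum_congr rfl (fun b hb => ?_), Finset.sum_const, smul_eq_mul,
        Nat.mul_comm]
      have hbB := hb
      rw [hB, Finset.mem_erase] at hbB
      exact h2 b hbB.2 hbB.1
    rw [hz, hrest] at hsum
    omega
  have hMcard : M.card = B.card := by
    rw [hM, Finset.card_compl, ← hq]
    have : (univ.image f).card = 1 + B.card := by
      have hins : univ.image f = insert 0 B := by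
        rw [hB, Finset.insert_erase h0mem]
      rw [hins, Finset.card_insert_of_notMem (Finset.notMem_erase _ _), ← hB]
      omega
    omega
  have hdis : Disjoint B M := by
    have : Disjoint (univ.image f) M := by
      rw [hM]; exact disjoint_compl_right
    exact this.mono_left (Finset.erase_subset _ _)
  have hn0 : n 0 = B.card := by rw [h0]; omega
  have hnk : ∀ j, n j = (stp q)^[j] (B.card) := by
    intro j
    induction j with
    | zero => simpa using hn0
    | succ j ihj =>
      rw [Function.iterate_succ_apply', ← ihj, hrec j, stp, hq]
  -- get the bijection φ : B → M
  obtain ⟨φ, hφimg, hφcard⟩ := key k B M hdis hMcard.symm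
  rw [← hq] at hφcard
  -- section of f on B
  set sB : G → G := fun b => if h : (preim f b).Nonempty then h.choose else 0 with hsB
  have hsBmem : ∀ b ∈ B, sB b ∈ preim f b := by
    intro b hb
    have hbB := hb
    rw [hB, Finset.mem_erase] at hbB
    have hne : (preim f b).Nonempty := by
      rw [← Finset.card_pos, h2 b hbB.2 hbB.1]; omega
    rw [hsB]; simp only [dif_pos hne]; exact hne.choose_spec
  have hsBval : ∀ b ∈ B, f (sB b) = b := fun b hb =>
    (Finset.mem_filter.mp (hsBmem b hb)).2
  -- the permutation h and the function g
  set h : G → G := fun x => if f x ≠ 0 ∧ x = sB (f x) then φ (f x) else f x with hh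
  have hhval : ∀ x : G, h x = if f x ≠ 0 ∧ x = sB (f x) then φ (f x) else f x :=
    fun x => rfl
  have hBmem : ∀ x : G, f x ≠ 0 → f x ∈ B := by
    intro x hx
    rw [hB, Finset.mem_erase]
    exact ⟨hx, mem_image.mpr ⟨x, mem_univ x, rfl⟩⟩
  have hsurj : Function.Surjective h := by
    intro y
    by_cases hy : y ∈ univ.image f
    · by_cases hy0 : y = 0
      · refine ⟨0, ?_⟩
        rw [hhval, if_neg (by simp [hf0]), hf0, hy0]
      · have h1lt : 1 < (preim f y).card := by rw [h2 y hy hy0]; omega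
        obtain ⟨v, hv, hvne⟩ := Finset.exists_mem_ne h1lt (sB y)
        have hfv : f v = y := (Finset.mem_filter.mp hv).2
        refine ⟨v, ?_⟩
        rw [hhval, if_neg (fun hcon => hvne (hfv ▸ hcon.2)), hfv]
    · have hyM : y ∈ M := by rw [hM]; exact Finset.mem_compl.mpr hy
      rw [← hφimg] at hyM
      obtain ⟨b, hb, rfl⟩ := mem_image.mp hyM
      refine ⟨sB b, ?_⟩
      have hfb : f (sB b) = b := hsBval b hb
      have hbne : b ≠ 0 := by
        rw [hB, Finset.mem_erase] at hb; exact hb.1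
      rw [hhval, hfb, if_pos ⟨hbne, rfl⟩]
  have hbij : Function.Bijective h := Finite.surjective_iff_bijective.mp hsurj
  set g : G → G := fun x => h x - f x with hg
  have hgval : ∀ x : G, g x = h x - f x := fun x => rfl
  have hgbij : Function.Bijective (fun x => g x + f x) := by
    have : (fun x => g x + f x) = h := by
      funext x; rw [hgval]; exact sub_add_cancel (h x) (f x)
    rw [this]; exact hbij
  have hgsub : univ.image g ⊆ insert (0 : G) (B.image (fun b => φ b - b)) := by
    intro y hy
    obtain ⟨x, _, rfl⟩ := mem_image.mp hy
    by_cases hfx : f x = 0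
    · have hx0 : x = 0 := by
        have : x ∈ preim f 0 := Finset.mem_filter.mpr ⟨mem_univ x, hfx⟩
        rw [hp0, Finset.mem_singleton] at this; exact this
      have : g x = 0 := by
        rw [hgval, hhval]; subst hx0
        simp [hf0]
      rw [this]; exact Finset.mem_insert_self _ _
    · by_cases hxs : x = sB (f x)
      · have : g x = φ (f x) - f x := by
          rw [hgval, hhval, if_pos (⟨hfx, hxs⟩ : f x ≠ 0 ∧ x = sB (f x))]
        rw [this]
        exact Finset.mem_insert_of_mem (mem_image.mpr ⟨f x, hBmem x hfx, rfl⟩)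
      · have : g x = 0 := by
          rw [hgval, hhval,
            if_neg (fun hcon : f x ≠ 0 ∧ x = sB (f x) => hxs hcon.2)]
          exact sub_self (f x)
        rw [this]; exact Finset.mem_insert_self _ _
  have himcard : imCard g ≤ 1 + k + n k := by
    have h1 := Finset.card_le_card hgsub
    have h2' := Finset.card_insert_le (0 : G) (B.image (fun b => φ b - b))
    rw [hnk k]
    unfold imCard
    omega
  have hmem : imCard g ∈ {n | ∃ g' : G → G,
      Function.Bijective (fun x => g' x + f x) ∧ imCard g' = n} := ⟨g, hgbij, rfl⟩
  exact le_trans (Nat.sInf_le hmem) himcard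
end
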